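/- arXiv:1902.10325 — 6 statements merged into one kernel-verified Lean document; each statement's English description precedes it below -/
import Mathlib

section
/- Let X be a Polish space, (Ξ, 𝒜, ℙ) a complete probability space, T : Ξ → Ξ an ergodic measure-preserving transformation, and M : Ξ ⇉ X a measurable set-valued map with closed values. Set E_n(ξ) := ⋂_{k=1}^n M(T^k(ξ)) and M_as := {x ∈ X : x ∈ M(ξ) for ℙ-a.e. ξ}. Then for ℙ-a.e. ξ ∈ Ξ, the indicator functions δ_{E_n(ξ)} epi-converge to δ_{M_as} (equivalently, the averaged indicators (1/n) Σ_{k=1}^n δ_{M(T^k(ξ))} epi-converge to δ_{M_as}). -/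
open Filter Topology MeasureTheory Set

noncomputable section

/-- Epi-convergence of a sequence of extended-real-valued functions on a metric space:
for every `x`, (a) `liminf f n (u n) ≥ g x` along every sequence `u → x`, and
(b) `limsup f n (u n) ≤ g x` along some sequence `u → x`. -/
def EpiConv {X : Type*} [MetricSpace X] (f : ℕ → X → EReal) (g : X → EReal) : Prop :=
  ∀ x : X,
    (∀ u : ℕ → X, Tendsto u atTop (𝓝 x) → g x ≤ atTop.liminf fun n => f n (u n)) ∧
    (∃ u : ℕ → X, Tendsto u atTop (𝓝 x) ∧ (atTop.limsup fun n => f n (u n)) ≤ g x)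

/-- Continuous convergence: `f n (u n) → g x` for every `x` and every sequence `u → x`. -/
def ContConv {X : Type*} [MetricSpace X] (f : ℕ → X → EReal) (g : X → EReal) : Prop :=
  ∀ x : X, ∀ u : ℕ → X, Tendsto u atTop (𝓝 x) →
    Tendsto (fun n => f n (u n)) atTop (𝓝 (g x))

/-- Infimal value of `h` on `C`. -/
def vOn {X : Type*} (h : X → EReal) (C : Set X) : EReal := ⨅ x ∈ C, h x

open Classical in
/-- ε-infimal value of `h` on `C`: `inf_C h + ε` if `inf_C h > -∞`, and `-1/ε` otherwise
(with the convention `1/0 = +∞`, so `-1/0 = -∞`). -/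
def vEpsOn {X : Type*} (h : X → EReal) (C : Set X) (ε : ℝ) : EReal :=
  if vOn h C = ⊥ then (if ε = 0 then ⊥ else ((-ε⁻¹ : ℝ) : EReal))
  else vOn h C + (ε : EReal)

/-- ε-argmin of `h` on `C`: the points of `C` where `h` is below the ε-infimal value. -/
def argminOn {X : Type*} (h : X → EReal) (C : Set X) (ε : ℝ) : Set X :=
  {x ∈ C | h x ≤ vEpsOn h C ε}

/-- Painlevé–Kuratowski outer limit: points whose distance to `S n` has liminf 0. -/
def outerLim {X : Type*} [MetricSpace X] (S : ℕ → Set X) : Set X :=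
  {x | atTop.liminf (fun n => EMetric.infEdist x (S n)) = 0}

/-- Painlevé–Kuratowski inner limit: points whose distance to `S n` has limsup 0. -/
def innerLim {X : Type*} [MetricSpace X] (S : ℕ → Set X) : Set X :=
  {x | atTop.limsup (fun n => EMetric.infEdist x (S n)) = 0}

open Classical in
/-- Indicator function `δ_A`: `0` on `A`, `+∞` off `A`. -/
def delta {X : Type*} (A : Set X) : X → EReal := fun x => if x ∈ A then 0 else ⊤

/-- The sequence `g n` is eventually level-compact on the sets `C n`: for every level `α`
there is `N` such that the union over `n ≥ N` of the `α`-sublevel sets of `g n` on `C n`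
is relatively compact. -/
def EvLevelCompact {X : Type*} [MetricSpace X] (g : ℕ → X → EReal) (C : ℕ → Set X) : Prop :=
  ∀ α : ℝ, ∃ N : ℕ, IsCompact (closure (⋃ n ∈ Ici N, {x ∈ C n | g n x ≤ (α : EReal)}))

/-- Measurability of a set-valued map: preimages of open sets are measurable. -/
def MeasurableMultifun {Ξ X : Type*} [MeasurableSpace Ξ] [TopologicalSpace X]
    (M : Ξ → Set X) : Prop :=
  ∀ U : Set X, IsOpen U → MeasurableSet {ξ | (M ξ ∩ U).Nonempty}

/-- `P` is the countable product `ℙ^∞` of the probability measure `ℙ`: every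
finite-dimensional cylinder has product measure. -/
def IsProductMeasure {Ξ : Type*} [MeasurableSpace Ξ] (P : Measure (ℕ → Ξ))
    (ℙ : Measure Ξ) : Prop :=
  ∀ (s : Finset ℕ) (A : ℕ → Set Ξ), (∀ i, MeasurableSet (A i)) →
    P {ω | ∀ i ∈ s, ω i ∈ A i} = ∏ i ∈ s, ℙ (A i)

/-- Moreau envelope `e_λ g`. -/
def moreau {d : ℕ} (g : EuclideanSpace ℝ (Fin d) → EReal) (lam : ℝ)
    (x : EuclideanSpace ℝ (Fin d)) : EReal :=
  ⨅ u, g u + ((‖x - u‖ ^ 2 / (2 * lam) : ℝ) : EReal)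

/-- Ergodicity: if `A` has measure `< 1` then a.e. orbit exits `A` at some positive time. -/
lemma erg_exit {Ξ : Type*} [MeasurableSpace Ξ] (ℙ : Measure Ξ) [IsProbabilityMeasure ℙ]
    (T : Ξ → Ξ) (hT : Ergodic T ℙ) {A : Set Ξ} (hA : MeasurableSet A) (hA1 : ℙ A < 1) :
    ∀ᵐ ξ ∂ℙ, ∃ k : ℕ, T^[k + 1] ξ ∉ A := by
  have hTm : Measurable T := hT.toMeasurePreserving.measurable
  set B : Set Ξ := ⋂ k : ℕ, T^[k + 1] ⁻¹' A with hB
  have hBm : MeasurableSet B := MeasurableSet.iInter fun k => (hTm.iterate _) hA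
  have hsub : B ⊆ T ⁻¹' B := by
    intro x hx
    simp only [hB, Set.mem_iInter, Set.mem_preimage] at hx ⊢
    intro k
    rw [← Function.iterate_succ_apply]
    exact hx (k + 1)
  have := hT.ae_empty_or_univ_of_ae_le_preimage hBm.nullMeasurableSet
    (HasSubset.Subset.eventuallyLE hsub)
  rcases this with h | h
  · have hB0 : ℙ B = 0 := by
      simpa using measure_congr h
    have : ∀ᵐ ξ ∂ℙ, ξ ∉ B := by
      rw [ae_iff]
      simpa using hB0
    filter_upwards [this] with ξ hξ
    simp only [hB, Set.mem_iInter, Set.mem_preimage, not_forall] at hξ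
    exact hξ
  · exfalso
    have hB1 : ℙ B = 1 := by
      have := measure_congr h
      simpa using this
    have hle : ℙ B ≤ ℙ A := by
      have : B ⊆ T^[0 + 1] ⁻¹' A := Set.iInter_subset _ 0
      calc ℙ B ≤ ℙ (T^[1] ⁻¹' A) := measure_mono this
        _ = ℙ A := (hT.toMeasurePreserving.iterate 1).measure_preimage hA.nullMeasurableSet
    rw [hB1] at hle
    exact absurd (lt_of_lt_of_le hA1 (le_trans hle le_rfl)) (lt_irrefl _)

/-- for an ergodic measure-preserving `T` and a measurable closed-valued
multifunction `M`, for a.e. `ξ` the indicator functions of `E n ξ = ⋂_{k=1}^n M(T^k ξ)`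

epi-converge to the indicator of `M_as = {x : x ∈ M ξ a.s.}`. -/
theorem ergodic_delta_epiConv {X : Type*} [MetricSpace X] [PolishSpace X]
    {Ξ : Type*} [MeasurableSpace Ξ] (ℙ : Measure Ξ) [IsProbabilityMeasure ℙ] [ℙ.IsComplete]
    (T : Ξ → Ξ) (hT : Ergodic T ℙ)
    (M : Ξ → Set X) (hM_closed : ∀ ξ, IsClosed (M ξ)) (hM_meas : MeasurableMultifun M) :
    ∀ᵐ ξ ∂ℙ,
      EpiConv (fun n => delta (⋂ k ∈ Finset.Icc 1 n, M (T^[k] ξ)))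
        (delta {x : X | ∀ᵐ ζ ∂ℙ, x ∈ M ζ}) :=  by
  classical
  set MAS : Set X := {x : X | ∀ᵐ ζ ∂ℙ, x ∈ M ζ} with hMASdef
  have hTm : Measurable T := hT.toMeasurePreserving.measurable
  have hTk : ∀ k : ℕ, MeasurePreserving (T^[k]) ℙ ℙ := fun k => hT.toMeasurePreserving.iterate k
  -- countable dense subset of MAS
  have hsep : TopologicalSpace.IsSeparable MAS :=
    (TopologicalSpace.isSeparable_univ_iff.mpr inferInstance).mono (Set.subset_univ _)
  obtain ⟨D, hDsub, hDcount, hDdense⟩ := hsep.exists_countable_dense_subset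
  -- the countable basis
  set 𝔅 : Set (Set X) := TopologicalSpace.countableBasis X with h𝔅
  have h𝔅count : 𝔅.Countable := TopologicalSpace.countable_countableBasis X
  set A : Set X → Set Ξ := fun U => {ζ | (M ζ ∩ U).Nonempty} with hAdef
  have hAm : ∀ U ∈ 𝔅, MeasurableSet (A U) := fun U hU =>
    hM_meas U (TopologicalSpace.isOpen_of_mem_countableBasis hU)
  -- criterion for membership in MAS
  have hcrit : ∀ x : X, (∀ U ∈ 𝔅, x ∈ U → ℙ (A U) = 1) → x ∈ MAS := by
    intro x hx
    have hae : ∀ᵐ ζ ∂ℙ, ∀ U ∈ 𝔅, ℙ (A U) = 1 → (M ζ ∩ U).Nonempty := by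
      rw [MeasureTheory.ae_ball_iff h𝔅count]
      intro U hU
      by_cases h1 : ℙ (A U) = 1
      · have hc : ℙ (A U)ᶜ = 0 := by
          rw [measure_compl (hAm U hU) (measure_ne_top _ _), h1, measure_univ]
          simp
        have : ∀ᵐ ζ ∂ℙ, ζ ∈ A U := by
          rw [ae_iff]; exact hc
        filter_upwards [this] with ζ hζ _
        exact hζ
      · filter_upwards with ζ h; exact absurd h h1
    filter_upwards [hae] with ζ hζ
    have hxc : x ∈ closure (M ζ) := by
      rw [(TopologicalSpace.isBasis_countableBasis X).mem_closure_iff]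
      intro U hU hxU
      rcases hζ U hU (hx U hU hxU) with ⟨y, hyM, hyU⟩
      exact ⟨y, hyU, hyM⟩
    rwa [(hM_closed ζ).closure_eq] at hxc
  -- good event 1 : all points of D stay in all the M (T^[k] ξ)
  have hP1 : ∀ᵐ ξ ∂ℙ, ∀ d ∈ D, ∀ k : ℕ, d ∈ M (T^[k] ξ) := by
    rw [MeasureTheory.ae_ball_iff hDcount]
    intro d hd
    rw [ae_all_iff]
    intro k
    exact (hTk k).quasiMeasurePreserving.ae (hDsub hd)
  -- good event 2 : orbits exit sets of measure < 1
  have hP2 : ∀ᵐ ξ ∂ℙ, ∀ U ∈ 𝔅, ℙ (A U) < 1 → ∃ k : ℕ, (M (T^[k + 1] ξ) ∩ U) = ∅ := by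
    rw [MeasureTheory.ae_ball_iff h𝔅count]
    intro U hU
    by_cases h1 : ℙ (A U) < 1
    · filter_upwards [erg_exit ℙ T hT (hAm U hU) h1] with ξ hξ _
      rcases hξ with ⟨k, hk⟩
      exact ⟨k, Set.not_nonempty_iff_eq_empty.mp hk⟩
    · filter_upwards with ξ h; exact absurd h h1
  filter_upwards [hP1, hP2] with ξ hξ1 hξ2
  intro x
  constructor
  · -- liminf condition
    intro u hu
    by_cases hx : x ∈ MAS
    · rw [show delta MAS x = 0 from if_pos hx]
      apply Filter.le_liminf_of_le (by isBoundedDefault)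
      filter_upwards with n
      unfold delta
      split
      · exact le_refl _
      · exact le_top
    · rw [show delta MAS x = ⊤ from if_neg hx]
      by_contra hcon
      -- then frequently u n ∈ E n
      have hfreq : ∃ᶠ n in atTop, u n ∈ ⋂ k ∈ Finset.Icc 1 n, M (T^[k] ξ) := by
        rw [not_le] at hcon
        have : ∃ᶠ n in atTop,
            delta (⋂ k ∈ Finset.Icc 1 n, M (T^[k] ξ)) (u n) < ⊤ := by
          by_contra hc
          rw [Filter.not_frequently] at hc
          have : (⊤ : EReal) ≤ atTop.liminf fun n =>
              delta (⋂ k ∈ Finset.Icc 1 n, M (T^[k] ξ)) (u n) := by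
            apply Filter.le_liminf_of_le (by isBoundedDefault)
            filter_upwards [hc] with n hn
            exact le_of_not_gt hn
          exact absurd this (not_le_of_gt hcon)
        refine this.mono fun n hn => ?_
        by_contra hmem
        rw [show delta (⋂ k ∈ Finset.Icc 1 n, M (T^[k] ξ)) (u n) = ⊤ from if_neg hmem] at hn
        exact lt_irrefl _ hn
      -- hence x is in every M (T^[k] ξ), k ≥ 1
      have hxE : ∀ k : ℕ, 1 ≤ k → x ∈ M (T^[k] ξ) := by
        intro k hk
        apply (hM_closed (T^[k] ξ)).mem_of_frequently_of_tendsto _ hu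
        have : ∃ᶠ n in atTop, u n ∈ (⋂ j ∈ Finset.Icc 1 n, M (T^[j] ξ)) ∧ k ≤ n :=
          hfreq.and_eventually (Filter.eventually_ge_atTop k)
        refine this.mono fun n hn => ?_
        have := Set.mem_iInter₂.mp hn.1 k (Finset.mem_Icc.mpr ⟨hk, hn.2⟩)
        exact this
      -- but x ∉ MAS gives a basis set of measure < 1 containing x
      have hexU : ∃ U ∈ 𝔅, x ∈ U ∧ ℙ (A U) < 1 := by
        by_contra hc
        push_neg at hc
        apply hx
        apply hcrit
        intro U hU hxU
        have hle : ℙ (A U) ≤ 1 := prob_le_one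
        exact le_antisymm hle (hc U hU hxU)
      rcases hexU with ⟨U, hU, hxU, hU1⟩
      rcases hξ2 U hU hU1 with ⟨k, hk⟩
      have : x ∈ M (T^[k + 1] ξ) ∩ U := ⟨hxE (k + 1) (Nat.succ_le_succ (Nat.zero_le k)), hxU⟩
      rw [hk] at this
      exact this
  · -- limsup condition
    by_cases hx : x ∈ MAS
    · -- choose points of D approximating x
      have hxcl : x ∈ closure D := hDdense hx
      have hch : ∀ n : ℕ, ∃ d ∈ D, dist x d < 1 / (n + 1) := fun n =>
        Metric.mem_closure_iff.mp hxcl _ (by positivity)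
      choose u huD hud using hch
      refine ⟨u, ?_, ?_⟩
      · rw [tendsto_iff_dist_tendsto_zero]
        apply squeeze_zero (fun n => dist_nonneg) (fun n => (dist_comm (u n) x ▸ (hud n).le))
        exact tendsto_one_div_add_atTop_nhds_zero_nat
      · have heq : ∀ n : ℕ, delta (⋂ k ∈ Finset.Icc 1 n, M (T^[k] ξ)) (u n) = 0 := by
          intro n
          apply if_pos
          exact Set.mem_iInter₂.mpr fun k _ => hξ1 (u n) (huD n) k
        rw [show delta MAS x = 0 from if_pos hx]
        have hfun : (fun n => delta (⋂ k ∈ Finset.Icc 1 n, M (T^[k] ξ)) (u n))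
            = fun _ => (0 : EReal) := funext heq
        rw [hfun, Filter.limsup_const]
    · exact ⟨fun _ => x, tendsto_const_nhds,
        by rw [show delta MAS x = ⊤ from if_neg hx]; exact le_top⟩
end
end

section
/- Let X be a Polish space, (Ξ, 𝒜, ℙ) a complete probability space, T : Ξ → Ξ an ergodic measure-preserving transformation, M : Ξ ⇉ X a measurable set-valued map with closed values, g : X → ℝ ∪ {+∞} lower semicontinuous, and g_n : X → ℝ ∪ {+∞} a sequence of lower semicontinuous functions converging continuously to g. Define f_n(ξ, x) := g_n(x) + δ_{E_n(ξ)}(x), where E_n(ξ) := ⋂_{k=1}^n M(T^k(ξ)), and f(x) := g(x) + δ_{M_as}(x), where M_as := {x ∈ X : x ∈ M(ξ) for ℙ-a.e. ξ}. Then for ℙ-a.e. ξ ∈ Ξ, the functions f_n(ξ, ·) epi-converge to f. -/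
open Filter Topology MeasureTheory Set

noncomputable section

private lemma ergodic_recur {Ξ : Type*} [MeasurableSpace Ξ] {ℙ : Measure Ξ}
    [IsProbabilityMeasure ℙ] {T : Ξ → Ξ} (hT : Ergodic T ℙ) {A : Set Ξ}
    (hA : MeasurableSet A) (h0 : ℙ A ≠ 0) :
    ∀ᵐ ξ ∂ℙ, ∃ k, 1 ≤ k ∧ T^[k] ξ ∈ A := by
  set B : Set Ξ := ⋂ k : ℕ, T^[k+1] ⁻¹' Aᶜ with hB
  have hTm : Measurable T := hT.toMeasurePreserving.measurable
  have hBm : MeasurableSet B := MeasurableSet.iInter fun k => (hTm.iterate (k+1)) hA.compl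
  have hBsub : B ⊆ T ⁻¹' B := by
    intro ξ hξ
    simp only [hB, Set.mem_iInter, Set.mem_preimage] at hξ ⊢
    intro k
    rw [← Function.iterate_succ_apply]
    exact hξ (k+1)
  set B' : Set Ξ := ⋃ n : ℕ, T^[n] ⁻¹' B with hB'
  have hmono : Monotone fun n : ℕ => T^[n] ⁻¹' B := by
    apply monotone_nat_of_le_succ
    intro n ξ hξ
    simp only [Set.mem_preimage] at hξ ⊢
    rw [Function.iterate_succ_apply']
    exact hBsub hξ
  have hB'm : MeasurableSet B' := MeasurableSet.iUnion fun n => (hTm.iterate n) hBm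
  have hinv : T ⁻¹' B' = B' := by
    apply Set.Subset.antisymm
    · intro ξ hξ
      simp only [hB', Set.mem_iUnion, Set.mem_preimage] at hξ ⊢
      obtain ⟨n, hn⟩ := hξ
      exact ⟨n+1, by rwa [Function.iterate_succ_apply]⟩
    · intro ξ hξ
      simp only [hB', Set.mem_iUnion, Set.mem_preimage] at hξ ⊢
      obtain ⟨n, hn⟩ := hξ
      refine ⟨n, ?_⟩
      rw [← Function.iterate_succ_apply]
      exact hmono (Nat.le_succ n) hn
  have hmeasB : ∀ n : ℕ, ℙ (T^[n] ⁻¹' B) = ℙ B := fun n =>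
    (hT.toMeasurePreserving.iterate n).measure_preimage hBm.nullMeasurableSet
  have hB'B : ℙ B' = ℙ B := by
    rw [hB', hmono.measure_iUnion]
    simp [hmeasB]
  have hBzero : ℙ B = 0 := by
    rcases hT.toPreErgodic.measure_self_or_compl_eq_zero hB'm hinv with h | h
    · rw [← hB'B]; exact h
    · exfalso
      have h1 : ℙ B' = 1 := (prob_compl_eq_zero_iff hB'm).mp h
      have hBle : B ⊆ T ⁻¹' Aᶜ := by
        intro ξ hξ
        simp only [hB, Set.mem_iInter, Set.mem_preimage] at hξ
        simpa using hξ 0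
      have hle : (1 : ENNReal) ≤ ℙ Aᶜ := by
        calc (1 : ENNReal) = ℙ B := by rw [← hB'B, h1]
          _ ≤ ℙ (T ⁻¹' Aᶜ) := measure_mono hBle
          _ = ℙ Aᶜ := hT.toMeasurePreserving.measure_preimage hA.compl.nullMeasurableSet
      have hA1 : ℙ Aᶜ = 1 := le_antisymm prob_le_one hle
      exact h0 ((prob_compl_eq_one_iff hA).mp hA1)
  have hae : ∀ᵐ ξ ∂ℙ, ξ ∉ B := by
    rw [ae_iff]
    simpa using hBzero
  filter_upwards [hae] with ξ hξ
  simp only [hB, Set.mem_iInter, Set.mem_preimage, not_forall, Set.mem_compl_iff, not_not] at hξ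
  obtain ⟨k, hk⟩ := hξ
  exact ⟨k + 1, Nat.succ_le_succ (Nat.zero_le k), hk⟩

/-- with `g n` lsc converging continuously to the lsc function `g`
(values in ℝ ∪ {+∞}), for a.e. `ξ` the functions
`f n (ξ,·) = g n + δ_{E n ξ}` epi-converge to `f = g + δ_{M_as}`. -/
theorem ergodic_epiConv {X : Type*} [MetricSpace X] [PolishSpace X]
    {Ξ : Type*} [MeasurableSpace Ξ] (ℙ : Measure Ξ) [IsProbabilityMeasure ℙ] [ℙ.IsComplete]
    (T : Ξ → Ξ) (hT : Ergodic T ℙ)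
    (M : Ξ → Set X) (hM_closed : ∀ ξ, IsClosed (M ξ)) (hM_meas : MeasurableMultifun M)
    (g : X → EReal) (gn : ℕ → X → EReal)
    (hg_noBot : ∀ x, g x ≠ ⊥) (hgn_noBot : ∀ n x, gn n x ≠ ⊥)
    (hg_lsc : LowerSemicontinuous g) (hgn_lsc : ∀ n, LowerSemicontinuous (gn n))
    (hcc : ContConv gn g) :
    ∀ᵐ ξ ∂ℙ,
      EpiConv (fun n x => gn n x + delta (⋂ k ∈ Finset.Icc 1 n, M (T^[k] ξ)) x)
        (fun x => g x + delta {y : X | ∀ᵐ ζ ∂ℙ, y ∈ M ζ} x) := by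
  classical
  set Mas : Set X := {y : X | ∀ᵐ ζ ∂ℙ, y ∈ M ζ} with hMasdef
  have hmiss : ∀ (d : X) (q : ℝ), MeasurableSet {ζ | M ζ ∩ Metric.ball d q = ∅} := by
    intro d q
    have h := (hM_meas (Metric.ball d q) Metric.isOpen_ball).compl
    convert h using 1
    ext ζ
    simp [Set.not_nonempty_iff_eq_empty]
  obtain ⟨D₀, hD₀c, hD₀d⟩ := TopologicalSpace.exists_countable_dense X
  obtain ⟨D₁, hD₁sub, hD₁c, hD₁d⟩ :=
    (TopologicalSpace.IsSeparable.of_separableSpace Mas).exists_countable_dense_subset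
  have E1 : ∀ᵐ ξ ∂ℙ, ∀ q : ℚ, ∀ d ∈ D₀,
      ℙ {ζ | M ζ ∩ Metric.ball d (q : ℝ) = ∅} ≠ 0 →
      ∃ k, 1 ≤ k ∧ M (T^[k] ξ) ∩ Metric.ball d (q : ℝ) = ∅ := by
    rw [ae_all_iff]
    intro q
    refine (ae_ball_iff hD₀c).2 ?_
    intro d hd
    by_cases h : ℙ {ζ | M ζ ∩ Metric.ball d (q : ℝ) = ∅} = 0
    · exact ae_of_all _ fun ξ h' => absurd h h'
    · filter_upwards [ergodic_recur hT (hmiss d q) h] with ξ hξ _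
      obtain ⟨k, hk1, hk2⟩ := hξ
      exact ⟨k, hk1, hk2⟩
  have E2 : ∀ᵐ ξ ∂ℙ, ∀ c ∈ D₁, ∀ k : ℕ, c ∈ M (T^[k] ξ) := by
    refine (ae_ball_iff hD₁c).2 ?_
    intro c hc
    rw [ae_all_iff]
    intro k
    have hcM : ∀ᵐ ζ ∂ℙ, c ∈ M ζ := hD₁sub hc
    have h0 : ℙ {ζ | ¬ c ∈ M ζ} = 0 := ae_iff.1 hcM
    have hpre := (hT.toMeasurePreserving.iterate k).quasiMeasurePreserving.preimage_null h0
    rw [ae_iff]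
    exact measure_mono_null (fun ξ hξ => hξ) hpre
  filter_upwards [E1, E2] with ξ h1 h2
  unfold EpiConv
  intro x
  have hEsub : ∀ {n k : ℕ} {y : X}, 1 ≤ k → k ≤ n →
      y ∈ (⋂ j ∈ Finset.Icc 1 n, M (T^[j] ξ)) → y ∈ M (T^[k] ξ) := by
    intro n k y h1k hkn hy
    exact Set.mem_iInter₂.1 hy k (Finset.mem_Icc.2 ⟨h1k, hkn⟩)
  have hkey : (∀ k : ℕ, 1 ≤ k → x ∈ M (T^[k] ξ)) → x ∈ Mas := by
    intro hxall
    by_contra hxn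
    have h' : ℙ {ζ | ¬ x ∈ M ζ} ≠ 0 := fun h0 => hxn (ae_iff.mpr h0)
    have hcover : {ζ | ¬ x ∈ M ζ} ⊆
        ⋃ q : {q : ℚ // 0 < q}, {ζ | M ζ ∩ Metric.ball x ((q : ℚ) : ℝ) = ∅} := by
      intro ζ hζ
      obtain ⟨ε, hε, hball⟩ := Metric.isOpen_iff.1 (hM_closed ζ).isOpen_compl x hζ
      obtain ⟨q, hq0, hqε⟩ := exists_rat_btwn hε
      refine Set.mem_iUnion.2 ⟨⟨q, by exact_mod_cast hq0⟩, ?_⟩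
      simp only [Set.mem_setOf_eq]
      rw [Set.eq_empty_iff_forall_notMem]
      intro y hy
      have hyball : y ∈ Metric.ball x ε :=
        Metric.mem_ball.2 (lt_trans (Metric.mem_ball.1 hy.2) hqε)
      exact (hball hyball) hy.1
    have hex : ∃ q : {q : ℚ // 0 < q},
        ℙ {ζ | M ζ ∩ Metric.ball x ((q : ℚ) : ℝ) = ∅} ≠ 0 := by
      by_contra hall
      push_neg at hall
      exact h' (measure_mono_null hcover (measure_iUnion_null hall))
    obtain ⟨⟨q, hq⟩, hqpos⟩ := hex
    have hqR : (0 : ℝ) < (q : ℝ) := by exact_mod_cast hq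
    have hq4 : (0 : ℝ) < (q : ℝ) / 4 := by positivity
    obtain ⟨d, hdball, hdD⟩ := Metric.dense_iff.1 hD₀d x ((q : ℝ) / 4) hq4
    have hsub : {ζ | M ζ ∩ Metric.ball x ((q : ℚ) : ℝ) = ∅} ⊆
        {ζ | M ζ ∩ Metric.ball d ((((q : ℚ) / 2 : ℚ)) : ℝ) = ∅} := by
      intro ζ hζ
      simp only [Set.mem_setOf_eq] at hζ ⊢
      rw [Set.eq_empty_iff_forall_notMem] at hζ ⊢
      intro y hy
      apply hζ y
      refine ⟨hy.1, ?_⟩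
      have hyd : dist y d < (q : ℝ) / 2 := by
        have := Metric.mem_ball.1 hy.2
        push_cast at this
        linarith
      have hdx : dist d x < (q : ℝ) / 4 := Metric.mem_ball.1 hdball
      have : dist y x < (q : ℝ) :=
        calc dist y x ≤ dist y d + dist d x := dist_triangle _ _ _
          _ < (q : ℝ) / 2 + (q : ℝ) / 4 := add_lt_add hyd hdx
          _ ≤ (q : ℝ) := by linarith
      exact Metric.mem_ball.2 this
    have hpos2 : ℙ {ζ | M ζ ∩ Metric.ball d ((((q : ℚ) / 2 : ℚ)) : ℝ) = ∅} ≠ 0 :=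
      fun h0 => hqpos (measure_mono_null hsub h0)
    obtain ⟨k, hk1, hk2⟩ := h1 (q / 2) d hdD hpos2
    have hxk := hxall k hk1
    have hxball : x ∈ Metric.ball d ((((q : ℚ) / 2 : ℚ)) : ℝ) := by
      rw [Metric.mem_ball]
      have hxd : dist x d < (q : ℝ) / 4 := by
        rw [dist_comm]; exact Metric.mem_ball.1 hdball
      push_cast
      linarith
    rw [Set.eq_empty_iff_forall_notMem] at hk2
    exact hk2 x ⟨hxk, hxball⟩
  constructor
  · intro u hu
    by_cases hx : x ∈ Mas
    · have hδ : delta Mas x = 0 := by simp only [delta]; rw [if_pos hx]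
      have hlim : atTop.liminf (fun n => gn n (u n)) = g x := (hcc x u hu).liminf_eq
      simp only [hδ, add_zero]
      rw [← hlim]
      refine Filter.liminf_le_liminf ?_
      refine Filter.Eventually.of_forall fun n => ?_
      by_cases h : u n ∈ (⋂ j ∈ Finset.Icc 1 n, M (T^[j] ξ))
      · simp only [delta]; rw [if_pos h, add_zero]
      · simp only [delta]; rw [if_neg h, EReal.add_top_of_ne_bot (hgn_noBot n _)]
        exact le_top
    · have hev : ∀ᶠ n in atTop, u n ∉ (⋂ j ∈ Finset.Icc 1 n, M (T^[j] ξ)) := by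
        by_contra hc
        rw [Filter.not_eventually] at hc
        simp only [not_not] at hc
        refine hx (hkey fun k hk => ?_)
        refine (hM_closed (T^[k] ξ)).mem_of_frequently_of_tendsto ?_ hu
        have hfreq := hc.and_eventually (Filter.eventually_ge_atTop k)
        exact hfreq.mono fun n hn => hEsub hk hn.2 hn.1
      have htop : ∀ᶠ n in atTop,
          gn n (u n) + delta (⋂ j ∈ Finset.Icc 1 n, M (T^[j] ξ)) (u n) = (⊤ : EReal) := by
        refine hev.mono fun n hn => ?_
        simp only [delta]
        rw [if_neg hn, EReal.add_top_of_ne_bot (hgn_noBot n _)]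
      rw [Filter.liminf_congr htop, Filter.liminf_const]
      exact le_top
  · by_cases hx : x ∈ Mas
    · have hxc : x ∈ closure D₁ := hD₁d hx
      have hchoice : ∀ n : ℕ, ∃ c ∈ D₁, dist x c < 1 / (n + 1) := fun n =>
        Metric.mem_closure_iff.1 hxc _ (by positivity)
      choose u huD hudist using hchoice
      have hut : Tendsto u atTop (𝓝 x) := by
        rw [tendsto_iff_dist_tendsto_zero]
        refine squeeze_zero (fun n => dist_nonneg) (fun n => ?_)
          tendsto_one_div_add_atTop_nhds_zero_nat
        rw [dist_comm]
        exact (hudist n).le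
      refine ⟨u, hut, ?_⟩
      have hmem : ∀ n, u n ∈ (⋂ j ∈ Finset.Icc 1 n, M (T^[j] ξ)) := by
        intro n
        refine Set.mem_iInter₂.2 fun j _ => h2 (u n) (huD n) j
      have heq : ∀ n, gn n (u n) + delta (⋂ j ∈ Finset.Icc 1 n, M (T^[j] ξ)) (u n)
          = gn n (u n) := fun n => by
        simp only [delta]; rw [if_pos (hmem n), add_zero]
      rw [Filter.limsup_congr (Filter.Eventually.of_forall heq),
        (hcc x u hut).limsup_eq]
      have hδ : delta Mas x = 0 := by simp only [delta]; rw [if_pos hx]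
      simp only [hδ, add_zero]
      exact le_rfl
    · refine ⟨fun _ => x, tendsto_const_nhds, ?_⟩
      have hδ : delta Mas x = ⊤ := by simp only [delta]; rw [if_neg hx]
      simp only [hδ]
      rw [EReal.add_top_of_ne_bot (hg_noBot x)]
      exact le_top
end
end

section
/- Let X be a Polish space, (Ξ, 𝒜, ℙ) a complete probability space, T : Ξ → Ξ an ergodic measure-preserving transformation, M : Ξ ⇉ X a measurable set-valued map with closed values, g : X → ℝ ∪ {+∞} lower semicontinuous, and g_n : X → ℝ ∪ {+∞} a sequence of lower semicontinuous functions converging continuously to g. Set E_n(ξ) := ⋂_{k=1}^n M(T^k(ξ)) and M_as := {x ∈ X : x ∈ M(ξ) for ℙ-a.e. ξ}. Assume the robust problem min{g(x) : x ∈ M_as} is feasible (there exists x ∈ M_as with g(x) < +∞) and that, for ℙ-a.e. ξ, the sequence g_n is eventually level-compact on E_n(ξ). Then for ℙ-a.e. ξ ∈ Ξ, the optimal values converge: lim_n v(g_n, E_n(ξ)) = v(g, M_as). -/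
open Filter Topology MeasureTheory Set

noncomputable section

section AuxLemmas

variable {X : Type*} [MetricSpace X] {Ξ : Type*} [MeasurableSpace Ξ]

/-- Membership event is measurable for a closed-valued measurable multifunction. -/
lemma meas_mem_event (M : Ξ → Set X) (hcl : ∀ ζ, IsClosed (M ζ))
    (hm : MeasurableMultifun M) (x : X) : MeasurableSet {ζ | x ∈ M ζ} := by
  have hkey : {ζ | x ∈ M ζ} =
      ⋂ m : ℕ, {ζ | (M ζ ∩ Metric.eball x (((m : ENNReal) + 1))⁻¹).Nonempty} := by
    ext ζ
    simp only [Set.mem_iInter, Set.mem_setOf_eq]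
    constructor
    · intro hx m
      refine ⟨x, hx, ?_⟩
      rw [EMetric.mem_ball, edist_self]
      exact ENNReal.inv_pos.2 (by simp)
    · intro h
      rw [EMetric.mem_iff_infEdist_zero_of_closed (hcl ζ)]
      by_contra h0
      obtain ⟨n, hn⟩ := ENNReal.exists_inv_nat_lt h0
      obtain ⟨z, hzM, hz⟩ := h n
      rw [EMetric.mem_ball] at hz
      have h1 : EMetric.infEdist x (M ζ) ≤ edist x z :=
        EMetric.infEdist_le_edist_of_mem hzM
      have h2 : ((n : ENNReal) + 1)⁻¹ ≤ (n : ENNReal)⁻¹ :=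
        ENNReal.inv_le_inv.2 le_self_add
      rw [edist_comm] at hz
      exact absurd (h1.trans_lt (hz.trans_le h2)) hn.asymm
  rw [hkey]
  exact MeasurableSet.iInter fun m => hm _ EMetric.isOpen_ball
/-- The "far from the set" event is measurable. -/
lemma meas_far_event (M : Ξ → Set X) (hm : MeasurableMultifun M) (y : X) (r : ENNReal) :
    MeasurableSet {ζ | r ≤ EMetric.infEdist y (M ζ)} := by
  have hkey : {ζ | r ≤ EMetric.infEdist y (M ζ)} =
      {ζ | (M ζ ∩ Metric.eball y r).Nonempty}ᶜ := by
    ext ζ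
    simp only [Set.mem_compl_iff, Set.mem_setOf_eq]
    rw [← not_lt, EMetric.infEdist, Metric.infEDist_lt_iff]
    constructor
    · rintro h ⟨z, hzM, hzb⟩
      rw [EMetric.mem_ball, edist_comm] at hzb
      exact h ⟨z, hzM, hzb⟩
    · rintro h ⟨z, hzM, hz⟩
      exact h ⟨z, hzM, by rwa [EMetric.mem_ball, edist_comm]⟩
  rw [hkey]
  exact (hm _ EMetric.isOpen_ball).compl

/-- Ergodic hitting lemma: a.e. point visits any positive-measure set at a positive time. -/
lemma ergodic_hitting {ℙ : Measure Ξ} [IsProbabilityMeasure ℙ]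
    {T : Ξ → Ξ} (hT : Ergodic T ℙ) {A : Set Ξ} (hA : MeasurableSet A) (h0 : ℙ A ≠ 0) :
    ∀ᵐ ξ ∂ℙ, ∃ k, 1 ≤ k ∧ T^[k] ξ ∈ A := by
  have hmeasT : Measurable T := hT.toMeasurePreserving.measurable
  set C : Set Ξ := ⋃ k : ℕ, T^[k + 1] ⁻¹' A with hCdef
  have hCm : MeasurableSet C := MeasurableSet.iUnion fun k => (hmeasT.iterate (k + 1)) hA
  have hpre : T ⁻¹' C ⊆ C := by
    rw [hCdef, Set.preimage_iUnion]
    refine Set.iUnion_subset fun k => ?_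
    have hcomp : T^[k + 1] ∘ T = T^[k + 2] := by
      rw [← Function.iterate_succ]
    rw [← Set.preimage_comp, hcomp]
    exact Set.subset_iUnion (fun k => T^[k + 1] ⁻¹' A) (k + 1)
  have hdisj := hT.ae_empty_or_univ_of_preimage_ae_le hCm.nullMeasurableSet
    (HasSubset.Subset.eventuallyLE hpre)
  have hCpos : ℙ C ≠ 0 := by
    intro hC0
    have hsub : T^[0 + 1] ⁻¹' A ⊆ C := Set.subset_iUnion (fun k => T^[k + 1] ⁻¹' A) 0
    have hple : ℙ (T^[1] ⁻¹' A) = ℙ A :=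
      (hT.toMeasurePreserving.iterate 1).measure_preimage hA.nullMeasurableSet
    exact h0 (by rw [← hple]; exact measure_mono_null hsub hC0)
  rcases hdisj with h | h
  · exact absurd (ae_eq_empty.mp h) hCpos
  · filter_upwards [ae_eq_univ.mp h] with ξ hξ
    have : ξ ∈ C := by
      by_contra hc
      exact hc (by simpa using hξ)
    obtain ⟨k, hk⟩ := Set.mem_iUnion.mp this
    exact ⟨k + 1, Nat.le_add_left 1 k, hk⟩

end AuxLemmas

/-- if the robust problem is feasible and `g n` is eventually level-compact
on `E n ξ` for a.e. `ξ`, then the optimal values converge: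
`v(g n, E n ξ) → v(g, M_as)` for a.e. `ξ`. -/
theorem ergodic_value_convergence {X : Type*} [MetricSpace X] [PolishSpace X]
    {Ξ : Type*} [MeasurableSpace Ξ] (ℙ : Measure Ξ) [IsProbabilityMeasure ℙ] [ℙ.IsComplete]
    (T : Ξ → Ξ) (hT : Ergodic T ℙ)
    (M : Ξ → Set X) (hM_closed : ∀ ξ, IsClosed (M ξ)) (hM_meas : MeasurableMultifun M)
    (g : X → EReal) (gn : ℕ → X → EReal)
    (hg_noBot : ∀ x, g x ≠ ⊥) (hgn_noBot : ∀ n x, gn n x ≠ ⊥)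
    (hg_lsc : LowerSemicontinuous g) (hgn_lsc : ∀ n, LowerSemicontinuous (gn n))
    (hcc : ContConv gn g)
    (hfeas : ∃ x ∈ {y : X | ∀ᵐ ζ ∂ℙ, y ∈ M ζ}, g x < ⊤)
    (hlc : ∀ᵐ ξ ∂ℙ, EvLevelCompact gn (fun n => ⋂ k ∈ Finset.Icc 1 n, M (T^[k] ξ))) :
    ∀ᵐ ξ ∂ℙ,
      Tendsto (fun n => vOn (gn n) (⋂ k ∈ Finset.Icc 1 n, M (T^[k] ξ))) atTop
        (𝓝 (vOn g {y : X | ∀ᵐ ζ ∂ℙ, y ∈ M ζ})) := by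
  classical
  set Mas : Set X := {y : X | ∀ᵐ ζ ∂ℙ, y ∈ M ζ} with hMasdef
  obtain ⟨D, hDc, hDd⟩ := TopologicalSpace.exists_countable_dense X
  obtain ⟨s, hsc, hsd⟩ := TopologicalSpace.exists_countable_dense (↥Mas)
  set c : Set X := Subtype.val '' s with hcdef
  have hccount : c.Countable := hsc.image _
  have hcMas : c ⊆ Mas := by rintro _ ⟨b, _, rfl⟩; exact b.2
  have hMascl : Mas ⊆ closure c := by
    intro x hx
    rw [Metric.mem_closure_iff]
    intro ε hε
    obtain ⟨b, hbb, hbs⟩ := (Metric.dense_iff.mp hsd) ⟨x, hx⟩ ε hε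
    refine ⟨(b : X), ⟨b, hbs, rfl⟩, ?_⟩
    rw [Metric.mem_ball] at hbb
    rw [dist_comm]
    exact (Subtype.dist_eq b ⟨x, hx⟩) ▸ hbb
  -- Event A: the a.s. feasible set is a.s. contained in all the `M (T^[k] ξ)`
  have hEvA : ∀ᵐ ξ ∂ℙ, ∀ x ∈ c, ∀ k : ℕ, x ∈ M (T^[k] ξ) := by
    rw [MeasureTheory.ae_ball_iff hccount]
    intro x hx
    rw [ae_all_iff]
    intro k
    have hG : MeasurableSet {ζ | x ∈ M ζ} := meas_mem_event M hM_closed hM_meas x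
    have hx' : ∀ᵐ ζ ∂ℙ, x ∈ M ζ := hcMas hx
    have h0 : ℙ {ζ | x ∈ M ζ}ᶜ = 0 := by
      rw [ae_iff] at hx'
      exact hx'
    have hpre : ℙ (T^[k] ⁻¹' {ζ | x ∈ M ζ}ᶜ) = 0 := by
      rw [(hT.toMeasurePreserving.iterate k).measure_preimage hG.compl.nullMeasurableSet]
      exact h0
    rw [ae_iff]
    exact hpre
  -- Event B: hitting the "far" events
  have hEvB : ∀ᵐ ξ ∂ℙ, ∀ y ∈ D, ∀ q : ℚ,
      (0 < q ∧ ℙ {ζ | ENNReal.ofReal (2 * q) ≤ EMetric.infEdist y (M ζ)} ≠ 0) →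
      ∃ k, 1 ≤ k ∧ ENNReal.ofReal (2 * q) ≤ EMetric.infEdist y (M (T^[k] ξ)) := by
    rw [MeasureTheory.ae_ball_iff hDc]
    intro y hy
    rw [ae_all_iff]
    intro q
    by_cases hq : 0 < q ∧ ℙ {ζ | ENNReal.ofReal (2 * q) ≤ EMetric.infEdist y (M ζ)} ≠ 0
    · filter_upwards [ergodic_hitting hT (meas_far_event M hM_meas y _) hq.2] with ξ hξ _
      exact hξ
    · filter_upwards with ξ h
      exact absurd h hq
  filter_upwards [hEvA, hEvB, hlc] with ξ hA hB hC
  set E : ℕ → Set X := fun n => ⋂ k ∈ Finset.Icc 1 n, M (T^[k] ξ) with hEdef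
  have hEclosed : ∀ n, IsClosed (E n) := fun n => isClosed_biInter fun k _ => hM_closed _
  have hMasE : ∀ n, Mas ⊆ E n := by
    intro n
    have hcE : c ⊆ E n := fun w hw => Set.mem_iInter₂.mpr fun k _ => hA w hw k
    exact fun x hx => closure_minimal hcE (hEclosed n) (hMascl hx)
  have hupper : Filter.limsup (fun n => vOn (gn n) (E n)) atTop ≤ vOn g Mas := by
    show Filter.limsup (fun n => vOn (gn n) (E n)) atTop ≤ ⨅ x ∈ Mas, g x
    refine le_iInf₂ fun x hx => ?_
    have hle : ∀ n, vOn (gn n) (E n) ≤ gn n x := fun n => iInf₂_le x (hMasE n hx)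
    have htend : Tendsto (fun n => gn n x) atTop (𝓝 (g x)) :=
      hcc x (fun _ => x) tendsto_const_nhds
    calc Filter.limsup (fun n => vOn (gn n) (E n)) atTop
        ≤ Filter.limsup (fun n => gn n x) atTop := limsup_le_limsup (Eventually.of_forall hle)
      _ = g x := htend.limsup_eq
  have hlower : vOn g Mas ≤ Filter.liminf (fun n => vOn (gn n) (E n)) atTop := by
    by_contra hcon
    rw [not_le] at hcon
    obtain ⟨α, hα1, hα2⟩ := EReal.exists_between_coe_real hcon
    have hfreq : ∃ᶠ n in atTop, vOn (gn n) (E n) < (α : EReal) :=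
      Filter.frequently_lt_of_liminf_lt (h := hα1)
    obtain ⟨N, hN⟩ := hC α
    obtain ⟨φ, hφmono, hφ⟩ := Filter.extraction_of_frequently_atTop
      (hfreq.and_eventually (eventually_ge_atTop N))
    have hzex : ∀ j, ∃ x, x ∈ E (φ j) ∧ gn (φ j) x < (α : EReal) := by
      intro j
      have hj : vOn (gn (φ j)) (E (φ j)) < (α : EReal) := (hφ j).1
      have hj' : (⨅ x ∈ E (φ j), gn (φ j) x) < (α : EReal) := hj
      obtain ⟨x, hx⟩ := iInf_lt_iff.mp hj'
      obtain ⟨hxE, hxlt⟩ := iInf_lt_iff.mp hx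
      exact ⟨x, hxE, hxlt⟩
    choose z hz1 hz2 using hzex
    have hzK : ∀ j, z j ∈ closure (⋃ n ∈ Ici N, {x ∈ E n | gn n x ≤ (α : EReal)}) := by
      intro j
      exact subset_closure (Set.mem_biUnion (hφ j).2 ⟨hz1 j, (hz2 j).le⟩)
    obtain ⟨xb, hxbK, ψ, hψmono, hψtend⟩ := hN.tendsto_subseq hzK
    set σ : ℕ → ℕ := fun i => φ (ψ i) with hσdef
    have hσmono : StrictMono σ := hφmono.comp hψmono
    set u : ℕ → X := fun n => if h : ∃ i, σ i = n then z (ψ h.choose) else xb with hudef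
    have hu_at : ∀ i, u (σ i) = z (ψ i) := by
      intro i
      have h : ∃ i', σ i' = σ i := ⟨i, rfl⟩
      have hchoose : h.choose = i := hσmono.injective h.choose_spec
      simp only [hudef, dif_pos h, hchoose]
    have hu_tend : Tendsto u atTop (𝓝 xb) := by
      rw [tendsto_atTop_nhds]
      intro U hU hUo
      obtain ⟨I, hI⟩ := (tendsto_atTop_nhds.mp hψtend) U hU hUo
      refine ⟨σ I, fun n hn => ?_⟩
      by_cases h : ∃ i, σ i = n
      · have hci : σ h.choose = n := h.choose_spec
        rw [← hci] at hn
        have hle : I ≤ h.choose := hσmono.le_iff_le.mp hn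
        simp only [hudef, dif_pos h]
        exact hI _ hle
      · simp only [hudef, dif_neg h]
        exact hU
    have hgxb : g xb ≤ (α : EReal) := by
      have htend := (hcc xb u hu_tend).comp hσmono.tendsto_atTop
      refine le_of_tendsto htend (Eventually.of_forall fun i => ?_)
      have hval : ((fun n => gn n (u n)) ∘ σ) i = gn (σ i) (z (ψ i)) := by
        simp only [Function.comp_apply, hu_at i]
      rw [hval]
      exact (hz2 (ψ i)).le
    have hxbnot : xb ∉ Mas := by
      intro hmem
      have hvle : vOn g Mas ≤ g xb := iInf₂_le xb hmem
      exact absurd (hvle.trans hgxb) (not_le.mpr hα2)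
    have hne0 : ℙ {ζ | xb ∉ M ζ} ≠ 0 := fun h => hxbnot (ae_iff.mpr h)
    have hsubU : {ζ | xb ∉ M ζ} ⊆
        ⋃ m : ℕ, {ζ | ENNReal.ofReal (1 / (m + 1)) ≤ EMetric.infEdist xb (M ζ)} := by
      intro ζ hζ
      have h0 : EMetric.infEdist xb (M ζ) ≠ 0 := fun h =>
        hζ ((EMetric.mem_iff_infEdist_zero_of_closed (hM_closed ζ)).mpr h)
      obtain ⟨r, hr0, hrle⟩ : ∃ r : ℝ, 0 < r ∧ ENNReal.ofReal r ≤ EMetric.infEdist xb (M ζ) := by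
        by_cases htop : EMetric.infEdist xb (M ζ) = ⊤
        · exact ⟨1, one_pos, by rw [htop]; exact le_top⟩
        · exact ⟨(EMetric.infEdist xb (M ζ)).toReal, ENNReal.toReal_pos h0 htop,
            ENNReal.ofReal_toReal_le⟩
      obtain ⟨m, hm⟩ := exists_nat_one_div_lt hr0
      exact Set.mem_iUnion.mpr ⟨m, le_trans (ENNReal.ofReal_le_ofReal hm.le) hrle⟩
    obtain ⟨m, hm0⟩ :
        ∃ m : ℕ, ℙ {ζ | ENNReal.ofReal (1 / (m + 1)) ≤ EMetric.infEdist xb (M ζ)} ≠ 0 := by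
      by_contra h
      push_neg at h
      exact hne0 (measure_mono_null hsubU (measure_iUnion_null h))
    set ε : ℝ := 1 / (m + 1) with hεdef
    have hε : 0 < ε := by positivity
    obtain ⟨y, hyball, hyD⟩ := (Metric.dense_iff.mp hDd) xb (ε / 8) (by positivity)
    rw [Metric.mem_ball] at hyball
    obtain ⟨q, hq1, hq2⟩ := exists_rat_btwn (show (ε / 8 : ℝ) < ε / 4 by linarith)
    have hq0R : (0 : ℝ) < (q : ℝ) := lt_trans (by positivity) hq1
    have hqpos : 0 < q := by exact_mod_cast hq0R
    have hdxy : dist xb y < (q : ℝ) := by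
      rw [dist_comm]
      linarith
    have hsubBad : {ζ | ENNReal.ofReal ε ≤ EMetric.infEdist xb (M ζ)} ⊆
        {ζ | ENNReal.ofReal (2 * q) ≤ EMetric.infEdist y (M ζ)} := by
      intro ζ hζ
      simp only [Set.mem_setOf_eq] at hζ ⊢
      have h1 : EMetric.infEdist xb (M ζ) ≤ EMetric.infEdist y (M ζ) + edist xb y :=
        EMetric.infEdist_le_infEdist_add_edist
      have h2 : edist xb y ≤ ENNReal.ofReal (q : ℝ) := by
        rw [edist_dist]
        exact ENNReal.ofReal_le_ofReal hdxy.le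
      have h3 : ENNReal.ofReal ε ≤ EMetric.infEdist y (M ζ) + ENNReal.ofReal (q : ℝ) :=
        hζ.trans (h1.trans (add_le_add_right h2 _))
      have h4 : ENNReal.ofReal ε - ENNReal.ofReal (q : ℝ) ≤ EMetric.infEdist y (M ζ) :=
        tsub_le_iff_right.mpr h3
      have h5 : ENNReal.ofReal (2 * q) ≤ ENNReal.ofReal ε - ENNReal.ofReal (q : ℝ) := by
        rw [← ENNReal.ofReal_sub _ hq0R.le]
        push_cast
        exact ENNReal.ofReal_le_ofReal (by linarith)
      exact h5.trans h4
    have hBad0 : ℙ {ζ | ENNReal.ofReal (2 * q) ≤ EMetric.infEdist y (M ζ)} ≠ 0 :=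
      fun h => hm0 (measure_mono_null hsubBad h)
    obtain ⟨k, hk1, hkB⟩ := hB y hyD q ⟨hqpos, hBad0⟩
    obtain ⟨I, hI⟩ := (Metric.tendsto_atTop.mp hψtend) ((q : ℝ) - dist xb y) (by linarith)
    set i := max I k with hidef
    have hdzi : dist (z (ψ i)) xb < (q : ℝ) - dist xb y := hI i (le_max_left _ _)
    have hkσ : k ≤ σ i := le_trans (le_max_right I k) (hσmono.le_apply)
    have hzmem : z (ψ i) ∈ M (T^[k] ξ) :=
      Set.mem_iInter₂.mp (hz1 (ψ i)) k (Finset.mem_Icc.mpr ⟨hk1, hkσ⟩)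
    have hlow : (2 * q : ℝ) ≤ dist y (z (ψ i)) := by
      have h6 : ENNReal.ofReal (2 * q) ≤ edist y (z (ψ i)) :=
        hkB.trans (EMetric.infEdist_le_edist_of_mem hzmem)
      rw [edist_dist] at h6
      have := (ENNReal.ofReal_le_ofReal_iff dist_nonneg).mp h6
      push_cast at this ⊢
      linarith
    have hhigh : dist y (z (ψ i)) < 2 * (q : ℝ) := by
      have ht := dist_triangle y xb (z (ψ i))
      have h7 : dist xb (z (ψ i)) < (q : ℝ) - dist xb y := by
        rw [dist_comm]
        exact hdzi
      have h8 : dist y xb = dist xb y := dist_comm _ _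
      linarith
    push_cast at hlow
    linarith
  exact tendsto_of_le_liminf_of_limsup_le hlower hupper
end
end

section
/- Let X be a Polish space, (Ξ, 𝒜, ℙ) a complete probability space, T : Ξ → Ξ an ergodic measure-preserving transformation, M : Ξ ⇉ X a measurable set-valued map with closed values, g : X → ℝ ∪ {+∞} lower semicontinuous, and g_n : X → ℝ ∪ {+∞} a sequence of lower semicontinuous functions converging continuously to g. Set E_n(ξ) := ⋂_{k=1}^n M(T^k(ξ)) and M_as := {x ∈ X : x ∈ M(ξ) for ℙ-a.e. ξ}. Assume the robust problem min{g(x) : x ∈ M_as} is feasible (there exists x ∈ M_as with g(x) < +∞) and that, for ℙ-a.e. ξ, the sequence g_n is eventually level-compact on E_n(ξ). Then for any measurable functions ε_n : Ξ → (0, +∞) with ε_n(ξ) → 0 for ℙ-a.e. ξ, one has, for ℙ-a.e. ξ ∈ Ξ: ∅ ≠ limsup_n (ε_n(ξ)-argmin_{E_n(ξ)} g_n) ⊆ argmin_{M_as} g, where limsup_n denotes the Painlevé–Kuratowski outer limit of sets. -/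
open Filter Topology MeasureTheory Set
open scoped ENNReal

noncomputable section

lemma vOn_le {X : Type*} {h : X → EReal} {C : Set X} {x : X} (hx : x ∈ C) :
    vOn h C ≤ h x := iInf₂_le x hx

lemma vOn_lt_iff {X : Type*} {h : X → EReal} {C : Set X} {c : EReal} :
    vOn h C < c ↔ ∃ x ∈ C, h x < c := by
  simp [vOn, iInf_lt_iff]

lemma ereal_exists_real {a : EReal} (hb : a ≠ ⊥) (ht : a ≠ ⊤) : ∃ r : ℝ, a = (r : EReal) := by
  lift a to ℝ using ⟨ht, hb⟩
  exact ⟨a, rfl⟩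

lemma contconv_subseq {X : Type*} [MetricSpace X] {gn : ℕ → X → EReal} {g : X → EReal}
    (hcc : ContConv gn g) {φ : ℕ → ℕ} (hφ : StrictMono φ) {y : ℕ → X} {x : X}
    (hy : Tendsto y atTop (𝓝 x)) :
    Tendsto (fun j => gn (φ j) (y j)) atTop (𝓝 (g x)) := by
  classical
  set u : ℕ → X := fun n => if h : ∃ j, φ j = n then y (Nat.find h) else x with hu
  have huφ : ∀ j, u (φ j) = y j := by
    intro j
    have h : ∃ j', φ j' = φ j := ⟨j, rfl⟩
    have hfj : Nat.find h = j := hφ.injective (Nat.find_spec h)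
    simp only [hu, dif_pos h, hfj]
  have hut : Tendsto u atTop (𝓝 x) := by
    rw [tendsto_atTop'] at hy ⊢
    intro V hV
    obtain ⟨J, hJ⟩ := hy V hV
    refine ⟨φ J, fun n hn => ?_⟩
    by_cases h : ∃ j, φ j = n
    · have hfind : φ (Nat.find h) = n := Nat.find_spec h
      have hJle : J ≤ Nat.find h := by
        by_contra hcon
        push_neg at hcon
        have := hφ hcon
        rw [hfind] at this
        exact absurd hn (not_le.mpr this)
      simp only [hu, dif_pos h]
      exact hJ _ hJle
    · simp only [hu, dif_neg h]
      exact mem_of_mem_nhds hV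
  have hkey := (hcc x u hut).comp hφ.tendsto_atTop
  have heq : (fun j => gn (φ j) (y j)) = (fun n => gn n (u n)) ∘ φ := by
    funext j
    simp [Function.comp, huφ j]
  rw [heq]
  exact hkey

lemma ergodic_visits {Ξ : Type*} [MeasurableSpace Ξ] {ℙ : Measure Ξ}
    [IsProbabilityMeasure ℙ] {T : Ξ → Ξ} (hT : Ergodic T ℙ) {A : Set Ξ}
    (hA : MeasurableSet A) (hpos : 0 < ℙ A) :
    ∀ᵐ ξ ∂ℙ, ∃ k, 1 ≤ k ∧ T^[k] ξ ∈ A := by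
  have hTm : Measurable T := hT.toMeasurePreserving.measurable
  set B : Set Ξ := ⋃ k : ℕ, T^[k + 1] ⁻¹' A with hB
  have hBm : MeasurableSet B := MeasurableSet.iUnion fun k => hA.preimage (hTm.iterate _)
  have hsub : T ⁻¹' B ⊆ B := by
    intro ξ hξ
    simp only [hB, mem_preimage, mem_iUnion] at hξ ⊢
    obtain ⟨k, hk⟩ := hξ
    exact ⟨k + 1, by rwa [Function.iterate_succ_apply]⟩
  rcases hT.ae_empty_or_univ_of_preimage_ae_le' hBm.nullMeasurableSet
      (HasSubset.Subset.eventuallyLE hsub) (measure_ne_top ℙ B) with h | h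
  · exfalso
    have h1 : ℙ (T^[0 + 1] ⁻¹' A) = ℙ A :=
      (hT.toMeasurePreserving.iterate 1).measure_preimage hA.nullMeasurableSet
    have h2 : T^[0 + 1] ⁻¹' A ⊆ B := subset_iUnion (fun k => T^[k + 1] ⁻¹' A) 0
    have h3 : ℙ B = 0 := by
      rw [measure_congr h]
      simp
    have h4 : ℙ (T^[0 + 1] ⁻¹' A) ≤ ℙ B := measure_mono h2
    rw [h1, h3] at h4
    exact absurd (le_antisymm h4 zero_le) (ne_of_gt hpos)
  · have hBc : ℙ Bᶜ = 0 := ae_eq_univ.mp h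
    have : ∀ᵐ ξ ∂ℙ, ξ ∈ B := by
      rw [ae_iff]
      simpa [Set.compl_def] using hBc
    filter_upwards [this] with ξ hξ
    simp only [hB, mem_iUnion, mem_preimage] at hξ
    obtain ⟨k, hk⟩ := hξ
    exact ⟨k + 1, Nat.succ_le_succ (Nat.zero_le _), hk⟩

lemma det_main {X : Type*} [MetricSpace X] {g : X → EReal} {gn : ℕ → X → EReal}
    (hg_noBot : ∀ x, g x ≠ ⊥) (hcc : ContConv gn g)
    {Mas : Set X} {E : ℕ → Set X}
    (hclust : ∀ φ : ℕ → ℕ, StrictMono φ → ∀ (y : ℕ → X) (x : X),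
      (∀ j, y j ∈ E (φ j)) → Tendsto y atTop (𝓝 x) → x ∈ Mas)
    (hwit : ∀ q : ℚ, vOn g Mas < ((q : ℝ) : EReal) →
      ∃ x ∈ Mas, (∀ n, x ∈ E n) ∧ g x < ((q : ℝ) : EReal))
    (hxbar : ∃ x ∈ Mas, (∀ n, x ∈ E n) ∧ g x < ⊤)
    (hlc : EvLevelCompact gn E)
    {ε : ℕ → ℝ} (hεpos : ∀ n, 0 < ε n) (hε0 : Tendsto ε atTop (𝓝 0)) :
    (outerLim fun n => argminOn (gn n) (E n) (ε n)).Nonempty ∧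
      (outerLim fun n => argminOn (gn n) (E n) (ε n)) ⊆ argminOn g Mas 0 := by
  obtain ⟨xb, hxbM, hxbE, hxbT⟩ := hxbar
  have hvtop : vOn g Mas < ⊤ := lt_of_le_of_lt (vOn_le hxbM) hxbT
  -- Step A : eventual bound on the ε-infimal values
  have hA : ∀ q : ℚ, vOn g Mas < ((q : ℝ) : EReal) →
      ∀ᶠ n in atTop, vEpsOn (gn n) (E n) (ε n) ≤ ((q : ℝ) : EReal) := by
    intro q hq
    obtain ⟨w, hwM, hwE, hwlt⟩ := hwit q hq
    obtain ⟨γ, hγ1, hγ2⟩ := EReal.lt_iff_exists_real_btwn.mp hwlt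
    have hγβ : γ < (q : ℝ) := EReal.coe_lt_coe_iff.mp hγ2
    have hgnw : Tendsto (fun n => gn n w) atTop (𝓝 (g w)) :=
      hcc w (fun _ => w) tendsto_const_nhds
    have h1 : ∀ᶠ n in atTop, gn n w < (γ : EReal) := hgnw.eventually_lt_const hγ1
    have h2 : ∀ᶠ n in atTop, ε n < (q : ℝ) - γ := hε0.eventually_lt_const (by linarith)
    have h3 : ∀ᶠ n in atTop, ε n < (|(q : ℝ)| + 1)⁻¹ := hε0.eventually_lt_const (by positivity)
    filter_upwards [h1, h2, h3] with n hn1 hn2 hn3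
    have hvn : vOn (gn n) (E n) ≤ (γ : EReal) := (vOn_le (hwE n)).trans hn1.le
    rw [vEpsOn]
    split_ifs with hb hz
    · exact absurd hz (ne_of_gt (hεpos n))
    · rw [EReal.coe_le_coe_iff]
      have hεn := hεpos n
      have h6 : |(q : ℝ)| + 1 < (ε n)⁻¹ := by
        have := one_div_lt_one_div_of_lt hεn hn3
        rw [one_div, one_div, inv_inv] at this
        exact this
      have h7 := neg_abs_le (q : ℝ)
      linarith
    · calc vOn (gn n) (E n) + (ε n : EReal)
          ≤ (γ : EReal) + (((q : ℝ) - γ : ℝ) : EReal) := by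
            exact add_le_add hvn (by exact_mod_cast hn2.le)
        _ = ((q : ℝ) : EReal) := by
            rw [← EReal.coe_add]
            norm_num
  -- Step B : nonemptiness of the approximate argmin sets
  have hEne : ∀ n, (E n).Nonempty := fun n => ⟨xb, hxbE n⟩
  have hargne : ∀ n, (argminOn (gn n) (E n) (ε n)).Nonempty := by
    intro n
    by_cases hb : vOn (gn n) (E n) = ⊥
    · have hlt : vOn (gn n) (E n) < ((-(ε n)⁻¹ : ℝ) : EReal) := by
        rw [hb]
        exact bot_lt_iff_ne_bot.mpr (EReal.coe_ne_bot _)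
      obtain ⟨x, hxE, hxlt⟩ := vOn_lt_iff.mp hlt
      refine ⟨x, hxE, ?_⟩
      rw [vEpsOn, if_pos hb, if_neg (ne_of_gt (hεpos n))]
      exact hxlt.le
    · by_cases ht : vOn (gn n) (E n) = ⊤
      · obtain ⟨x, hxE⟩ := hEne n
        refine ⟨x, hxE, ?_⟩
        rw [vEpsOn, if_neg hb, ht, EReal.top_add_coe]
        exact le_top
      · obtain ⟨r, hr⟩ := ereal_exists_real hb ht
        have hlt : vOn (gn n) (E n) < vOn (gn n) (E n) + (ε n : EReal) := by
          nth_rewrite 1 [hr]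
          rw [hr, ← EReal.coe_add, EReal.coe_lt_coe_iff]
          linarith [hεpos n]
        obtain ⟨x, hxE, hxlt⟩ := vOn_lt_iff.mp hlt
        exact ⟨x, hxE, by rw [vEpsOn, if_neg hb]; exact hxlt.le⟩
  -- Step C : cluster points of approximate argmins are exact argmins
  have hC : ∀ φ : ℕ → ℕ, StrictMono φ → ∀ (y : ℕ → X) (x : X),
      (∀ j, y j ∈ argminOn (gn (φ j)) (E (φ j)) (ε (φ j))) →
      Tendsto y atTop (𝓝 x) → x ∈ argminOn g Mas 0 := by
    intro φ hφ y x hy hyx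
    have hyE : ∀ j, y j ∈ E (φ j) := fun j => (hy j).1
    have hxM : x ∈ Mas := hclust φ hφ y x hyE hyx
    have hgt : Tendsto (fun j => gn (φ j) (y j)) atTop (𝓝 (g x)) := contconv_subseq hcc hφ hyx
    have hle : ∀ q : ℚ, vOn g Mas < ((q : ℝ) : EReal) → g x ≤ ((q : ℝ) : EReal) := by
      intro q hq
      have h1 := hφ.tendsto_atTop.eventually (hA q hq)
      have h2 : ∀ᶠ j in atTop, gn (φ j) (y j) ≤ ((q : ℝ) : EReal) :=
        h1.mono fun j hj => le_trans (hy j).2 hj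
      exact le_of_tendsto hgt h2
    have hgxv : g x ≤ vOn g Mas := by
      by_contra hcon
      push_neg at hcon
      obtain ⟨r, hr1, hr2⟩ := EReal.lt_iff_exists_real_btwn.mp hcon
      obtain ⟨r', hr'1, hr'2⟩ := EReal.lt_iff_exists_real_btwn.mp hr2
      obtain ⟨q, hq1, hq2⟩ := exists_rat_btwn (EReal.coe_lt_coe_iff.mp hr'1)
      have hvq : vOn g Mas < ((q : ℝ) : EReal) := hr1.trans (EReal.coe_lt_coe_iff.mpr hq1)
      have h1 := hle q hvq
      have hqgx : ((q : ℝ) : EReal) < g x := lt_trans (EReal.coe_lt_coe_iff.mpr hq2) hr'2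
      exact absurd (lt_of_le_of_lt h1 hqgx) (lt_irrefl _)
    have hveq : g x = vOn g Mas := le_antisymm hgxv (vOn_le hxM)
    have hvnb : vOn g Mas ≠ ⊥ := hveq ▸ hg_noBot x
    refine ⟨hxM, ?_⟩
    rw [vEpsOn, if_neg hvnb, EReal.coe_zero, add_zero]
    exact hgxv
  -- choose approximate minimizers
  choose xs hxs using hargne
  obtain ⟨b, hb1, hb2⟩ := EReal.lt_iff_exists_real_btwn.mp hvtop
  obtain ⟨q, hq⟩ := exists_rat_gt b
  have hvq : vOn g Mas < ((q : ℝ) : EReal) := hb1.trans (EReal.coe_lt_coe_iff.mpr hq)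
  have hev : ∀ᶠ n in atTop, gn n (xs n) ≤ ((q : ℝ) : EReal) :=
    (hA q hvq).mono fun n hn => le_trans (hxs n).2 hn
  obtain ⟨N₁, hN₁⟩ := eventually_atTop.mp hev
  obtain ⟨N₂, hK⟩ := hlc (q : ℝ)
  set N₀ := max N₁ N₂ with hN₀
  have hmem : ∀ j : ℕ, xs (j + N₀) ∈
      closure (⋃ n ∈ Ici N₂, {x ∈ E n | gn n x ≤ ((q : ℝ) : EReal)}) := by
    intro j
    apply subset_closure
    refine mem_biUnion (show j + N₀ ∈ Ici N₂ from
      le_trans (le_max_right N₁ N₂) (Nat.le_add_left _ _)) ?_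
    exact ⟨(hxs (j + N₀)).1, hN₁ _ (le_trans (le_max_left N₁ N₂) (Nat.le_add_left _ _))⟩
  obtain ⟨xst, hxstK, φ, hφ, hconv⟩ := hK.tendsto_subseq hmem
  set ψ : ℕ → ℕ := fun j => φ j + N₀ with hψdef
  have hψ : StrictMono ψ := fun a b hab => Nat.add_lt_add_right (hφ hab) N₀
  have hyarg : ∀ j, xs (ψ j) ∈ argminOn (gn (ψ j)) (E (ψ j)) (ε (ψ j)) := fun j => hxs _
  have hconv' : Tendsto (fun j => xs (ψ j)) atTop (𝓝 xst) := hconv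
  have hxstarg : xst ∈ argminOn g Mas 0 := hC ψ hψ _ xst hyarg hconv'
  constructor
  · refine ⟨xst, ?_⟩
    show atTop.liminf (fun n => EMetric.infEdist xst (argminOn (gn n) (E n) (ε n))) = 0
    refine le_antisymm ?_ zero_le
    have hdist : Tendsto
        (fun j => EMetric.infEdist xst (argminOn (gn (ψ j)) (E (ψ j)) (ε (ψ j))))
        atTop (𝓝 0) := by
      rw [ENNReal.tendsto_nhds_zero]
      intro δ hδ
      have hed : ∀ᶠ j in atTop, edist (xs (ψ j)) xst < δ :=
        EMetric.tendsto_nhds.mp hconv' δ hδ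
      filter_upwards [hed] with j hj
      exact le_trans (EMetric.infEdist_le_edist_of_mem (hyarg j))
        (by rw [edist_comm]; exact hj.le)
    have hfreqle : ∀ c : ℝ≥0∞, 0 < c →
        atTop.liminf (fun n => EMetric.infEdist xst (argminOn (gn n) (E n) (ε n))) ≤ c := by
      intro c hc
      apply liminf_le_of_frequently_le'
      rw [frequently_atTop]
      intro N
      have hev2 : ∀ᶠ j in atTop,
          EMetric.infEdist xst (argminOn (gn (ψ j)) (E (ψ j)) (ε (ψ j))) ≤ c := by
        rw [ENNReal.tendsto_nhds_zero] at hdist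
        exact hdist c hc
      obtain ⟨J, hJ⟩ := eventually_atTop.mp hev2
      refine ⟨ψ (max J N), ?_, hJ _ (le_max_left _ _)⟩
      exact le_trans (le_max_right J N) hψ.le_apply
    by_contra hne
    obtain ⟨c, hc1, hc2⟩ := exists_between (lt_of_not_ge hne)
    exact absurd (lt_of_le_of_lt (hfreqle c hc1) hc2) (lt_irrefl _)
  · intro x hx
    have hx' : atTop.liminf (fun n => EMetric.infEdist x (argminOn (gn n) (E n) (ε n))) = 0 := hx
    have hfreq : ∀ j : ℕ, ∃ᶠ n in atTop,
        EMetric.infEdist x (argminOn (gn n) (E n) (ε n)) < ((j + 1 : ℕ) : ℝ≥0∞)⁻¹ := by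
      intro j
      refine frequently_lt_of_liminf_lt (by isBoundedDefault) ?_
      rw [hx']
      exact ENNReal.inv_pos.mpr (ENNReal.natCast_ne_top _)
    obtain ⟨ψ', hψ', hψ'2⟩ := Filter.extraction_forall_of_frequently hfreq
    have hy : ∀ j : ℕ, ∃ y ∈ argminOn (gn (ψ' j)) (E (ψ' j)) (ε (ψ' j)),
        edist x y < ((j + 1 : ℕ) : ℝ≥0∞)⁻¹ := fun j => EMetric.infEdist_lt_iff.mp (hψ'2 j)
    choose y hyA hyd using hy
    have hinv0 : Tendsto (fun j : ℕ => ((j + 1 : ℕ) : ℝ≥0∞)⁻¹) atTop (𝓝 0) :=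
      ENNReal.tendsto_inv_nat_nhds_zero.comp (tendsto_add_atTop_nat 1)
    have hyx : Tendsto y atTop (𝓝 x) := by
      rw [EMetric.tendsto_nhds]
      intro δ hδ
      filter_upwards [hinv0.eventually_lt_const hδ] with j hj
      rw [edist_comm]
      exact lt_trans (hyd j) hj
    exact hC ψ' hψ' y x hyA hyx

/-- if the robust problem is feasible, `g n` is eventually level-compact
on `E n ξ` a.s., and `ε n ξ → 0` a.s. with `ε n > 0` measurable, then for a.e. `ξ`
the outer limit of the `ε n ξ`-argmins of `g n` on `E n ξ` is nonempty and contained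
in the argmin of `g` on `M_as`. -/
theorem ergodic_argmin_convergence {X : Type*} [MetricSpace X] [PolishSpace X]
    {Ξ : Type*} [MeasurableSpace Ξ] (ℙ : Measure Ξ) [IsProbabilityMeasure ℙ] [ℙ.IsComplete]
    (T : Ξ → Ξ) (hT : Ergodic T ℙ)
    (M : Ξ → Set X) (hM_closed : ∀ ξ, IsClosed (M ξ)) (hM_meas : MeasurableMultifun M)
    (g : X → EReal) (gn : ℕ → X → EReal)
    (hg_noBot : ∀ x, g x ≠ ⊥) (hgn_noBot : ∀ n x, gn n x ≠ ⊥)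
    (hg_lsc : LowerSemicontinuous g) (hgn_lsc : ∀ n, LowerSemicontinuous (gn n))
    (hcc : ContConv gn g)
    (hfeas : ∃ x ∈ {y : X | ∀ᵐ ζ ∂ℙ, y ∈ M ζ}, g x < ⊤)
    (hlc : ∀ᵐ ξ ∂ℙ, EvLevelCompact gn (fun n => ⋂ k ∈ Finset.Icc 1 n, M (T^[k] ξ)))
    (εn : ℕ → Ξ → ℝ) (hεn_meas : ∀ n, Measurable (εn n)) (hεn_pos : ∀ n ξ, 0 < εn n ξ)
    (hεn_to0 : ∀ᵐ ξ ∂ℙ, Tendsto (fun n => εn n ξ) atTop (𝓝 0)) :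
    ∀ᵐ ξ ∂ℙ,
      (outerLim (fun n =>
          argminOn (gn n) (⋂ k ∈ Finset.Icc 1 n, M (T^[k] ξ)) (εn n ξ))).Nonempty ∧
      outerLim (fun n =>
          argminOn (gn n) (⋂ k ∈ Finset.Icc 1 n, M (T^[k] ξ)) (εn n ξ)) ⊆
        argminOn g {y : X | ∀ᵐ ζ ∂ℙ, y ∈ M ζ} 0 := by
  classical
  obtain ⟨xb, hxbM, hxbT⟩ := hfeas
  haveI : Nonempty X := ⟨xb⟩
  set Mas : Set X := {y : X | ∀ᵐ ζ ∂ℙ, y ∈ M ζ} with hMasdef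
  -- measurability of the "membership" sets
  have hmemSet : ∀ x : X, MeasurableSet {ζ | x ∈ M ζ} := by
    intro x
    have heq : {ζ | x ∈ M ζ} =
        ⋂ m : ℕ, {ζ | (M ζ ∩ Metric.ball x (1 / (m + 1))).Nonempty} := by
      ext ζ
      simp only [mem_setOf_eq, mem_iInter]
      constructor
      · intro hx m
        exact ⟨x, hx, Metric.mem_ball_self (by positivity)⟩
      · intro h
        have hcl : x ∈ closure (M ζ) := by
          rw [Metric.mem_closure_iff]
          intro δ hδ
          obtain ⟨m, hm⟩ := exists_nat_one_div_lt hδ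
          obtain ⟨y, hyM, hyb⟩ := h m
          exact ⟨y, hyM, lt_trans (by rw [dist_comm]; exact Metric.mem_ball.mp hyb) hm⟩
        rwa [(hM_closed ζ).closure_eq] at hcl
    rw [heq]
    exact MeasurableSet.iInter fun m => hM_meas _ Metric.isOpen_ball
  -- fixed points of Mas belong to all the iterated sets, a.e.
  have hkey : ∀ z : X, z ∈ Mas → ∀ᵐ ξ ∂ℙ, ∀ k : ℕ, z ∈ M (T^[k] ξ) := by
    intro z hz
    rw [ae_all_iff]
    intro k
    have h0 : ℙ {ζ | z ∉ M ζ} = 0 := by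
      have := hz
      rwa [hMasdef, mem_setOf_eq, ae_iff] at this
    have h1 : ℙ (T^[k] ⁻¹' {ζ | z ∈ M ζ}ᶜ) = 0 := by
      rw [(hT.toMeasurePreserving.iterate k).measure_preimage
        ((hmemSet z).compl).nullMeasurableSet]
      exact h0
    rw [ae_iff]
    exact h1
  -- witnesses for rational levels
  have hwitQ : ∀ q : ℚ, ∃ w : X, w ∈ Mas ∧
      (vOn g Mas < ((q : ℝ) : EReal) → g w < ((q : ℝ) : EReal)) := by
    intro q
    by_cases hq : vOn g Mas < ((q : ℝ) : EReal)
    · obtain ⟨w, hwM, hwlt⟩ := vOn_lt_iff.mp hq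
      exact ⟨w, hwM, fun _ => hwlt⟩
    · exact ⟨xb, hxbM, fun h => absurd h hq⟩
  choose w hwM hwlt using hwitQ
  have P1 : ∀ᵐ ξ ∂ℙ, ∀ q : ℚ, ∀ k, w q ∈ M (T^[k] ξ) := by
    rw [ae_all_iff]
    intro q
    exact hkey _ (hwM q)
  have P1b : ∀ᵐ ξ ∂ℙ, ∀ k, xb ∈ M (T^[k] ξ) := hkey _ hxbM
  -- ergodic visiting of positive-measure avoidance sets
  have hu := TopologicalSpace.denseRange_denseSeq X
  set u := TopologicalSpace.denseSeq X with hudef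
  set A : ℕ → ℕ → Set Ξ :=
    fun i m => {ζ | ¬(M ζ ∩ Metric.ball (u i) (1 / (m + 1))).Nonempty} with hAdef
  have hAmeas : ∀ i m, MeasurableSet (A i m) := fun i m =>
    (hM_meas _ Metric.isOpen_ball).compl
  have P2 : ∀ᵐ ξ ∂ℙ, ∀ i m : ℕ, 0 < ℙ (A i m) → ∃ k, 1 ≤ k ∧ T^[k] ξ ∈ A i m := by
    rw [ae_all_iff]
    intro i
    rw [ae_all_iff]
    intro m
    by_cases hp : 0 < ℙ (A i m)
    · exact (ergodic_visits hT (hAmeas i m) hp).mono fun ξ h _ => h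
    · exact Eventually.of_forall fun ξ h => absurd h hp
  filter_upwards [P1, P1b, P2, hlc, hεn_to0] with ξ hP1 hP1b hP2 hlcξ hε0ξ
  set E : ℕ → Set X := fun n => ⋂ k ∈ Finset.Icc 1 n, M (T^[k] ξ) with hEdef
  have hmemE : ∀ z : X, (∀ k, z ∈ M (T^[k] ξ)) → ∀ n, z ∈ E n := by
    intro z hz n
    exact Set.mem_iInter₂.mpr fun k _ => hz k
  have hclust : ∀ φ : ℕ → ℕ, StrictMono φ → ∀ (y : ℕ → X) (x : X),
      (∀ j, y j ∈ E (φ j)) → Tendsto y atTop (𝓝 x) → x ∈ Mas := by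
    intro φ hφ y x hyE hyx
    have hxk : ∀ k, 1 ≤ k → x ∈ M (T^[k] ξ) := by
      intro k hk
      have hev : ∀ᶠ j in atTop, y j ∈ M (T^[k] ξ) := by
        filter_upwards [hφ.tendsto_atTop.eventually_ge_atTop k] with j hj
        exact Set.mem_iInter₂.mp (hyE j) k (Finset.mem_Icc.mpr ⟨hk, hj⟩)
      exact (hM_closed _).mem_of_tendsto hyx hev
    by_contra hxM
    have hne : ℙ {ζ | x ∉ M ζ} ≠ 0 := by
      intro h0
      exact hxM (by rw [hMasdef, mem_setOf_eq, ae_iff]; exact h0)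
    have hcover : {ζ | x ∉ M ζ} ⊆
        ⋃ m : ℕ, {ζ | ¬(M ζ ∩ Metric.ball x (1 / (m + 1))).Nonempty} := by
      intro ζ hζ
      simp only [mem_setOf_eq] at hζ
      have hnh : (M ζ)ᶜ ∈ 𝓝 x := (hM_closed ζ).isOpen_compl.mem_nhds hζ
      obtain ⟨δ, hδ, hball⟩ := Metric.mem_nhds_iff.mp hnh
      obtain ⟨m, hm⟩ := exists_nat_one_div_lt hδ
      refine mem_iUnion.mpr ⟨m, ?_⟩
      simp only [mem_setOf_eq]
      rintro ⟨y, hyM, hyb⟩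
      exact absurd hyM (hball (Metric.mem_ball.mpr (lt_trans (Metric.mem_ball.mp hyb) hm)))
    obtain ⟨m, hm⟩ : ∃ m : ℕ,
        ℙ {ζ | ¬(M ζ ∩ Metric.ball x (1 / (m + 1))).Nonempty} ≠ 0 := by
      by_contra hall
      push_neg at hall
      exact hne (measure_mono_null hcover (measure_iUnion_null fun m => by
        simpa [Set.not_nonempty_iff_eq_empty] using hall m))
    set m' : ℕ := 2 * m + 1 with hm'def
    have hcast : ((m' : ℝ) + 1) = 2 * ((m : ℝ) + 1) := by
      rw [hm'def]
      push_cast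
      ring
    have hmpos : (0:ℝ) < (m : ℝ) + 1 := by positivity
    have hs : (1 : ℝ) / (m' + 1) = (1 / (m + 1)) / 2 := by
      rw [hcast]
      field_simp
    obtain ⟨i, hi⟩ := Metric.denseRange_iff.mp hu x ((1 / ((m' : ℝ) + 1)) / 2) (by positivity)
    have hsubset : {ζ | ¬(M ζ ∩ Metric.ball x (1 / (m + 1))).Nonempty} ⊆ A i m' := by
      intro ζ hζ
      simp only [hAdef, mem_setOf_eq] at hζ ⊢
      rintro ⟨y, hyM, hyb⟩
      apply hζ
      refine ⟨y, hyM, Metric.mem_ball.mpr ?_⟩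
      have h1 : dist y (u i) < 1 / ((m' : ℝ) + 1) := Metric.mem_ball.mp hyb
      have h2 : dist y x ≤ dist y (u i) + dist (u i) x := dist_triangle _ _ _
      have h3 : dist (u i) x = dist x (u i) := dist_comm _ _
      have hrpos : (0:ℝ) < 1 / ((m : ℝ) + 1) := by positivity
      rw [h3] at h2
      linarith [hs, hi]
    have hApos : 0 < ℙ (A i m') := by
      have hmono : ℙ {ζ | ¬(M ζ ∩ Metric.ball x (1 / (m + 1))).Nonempty} ≤ ℙ (A i m') :=
        measure_mono hsubset
      exact lt_of_lt_of_le (pos_iff_ne_zero.mpr hm) hmono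
    obtain ⟨k, hk1, hkA⟩ := hP2 i m' hApos
    have hxk' : x ∈ M (T^[k] ξ) := hxk k hk1
    simp only [hAdef, mem_setOf_eq] at hkA
    have hspos : (0:ℝ) < 1 / ((m' : ℝ) + 1) := by positivity
    exact hkA ⟨x, hxk', Metric.mem_ball.mpr (by linarith [hi])⟩
  have hwit' : ∀ q : ℚ, vOn g Mas < ((q : ℝ) : EReal) →
      ∃ x ∈ Mas, (∀ n, x ∈ E n) ∧ g x < ((q : ℝ) : EReal) :=
    fun q hq => ⟨w q, hwM q, hmemE _ (hP1 q), hwlt q hq⟩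
  have hxbar' : ∃ x ∈ Mas, (∀ n, x ∈ E n) ∧ g x < ⊤ := ⟨xb, hxbM, hmemE _ hP1b, hxbT⟩
  exact det_main hg_noBot hcc hclust hwit' hxbar' hlcξ (fun n => hεn_pos n ξ) hε0ξ
end
end

section
/- Let X be a Polish space, (Ξ, 𝒜, ℙ) a complete probability space with countable product (Ξ^∞, 𝒜^∞, ℙ^∞), M : Ξ ⇉ X a measurable set-valued map with closed values, g : X → ℝ ∪ {+∞} lower semicontinuous, and g_n : X → ℝ ∪ {+∞} a sequence of lower semicontinuous functions converging continuously to g. For ω = (ξ_k)_{k≥1} ∈ Ξ^∞ define f_n(ω, x) := g_n(x) + δ_{S_n(ω)}(x), where S_n(ω) := ⋂_{k=1}^n M(ξ_k), and f(x) := g(x) + δ_{M_as}(x), where M_as := {x ∈ X : x ∈ M(ξ) for ℙ-a.e. ξ}. Then for ℙ^∞-a.e. ω ∈ Ξ^∞, the functions f_n(ω, ·) epi-converge to f. -/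
open Filter Topology MeasureTheory Set

noncomputable section

lemma delta_nonneg {X : Type*} (A : Set X) (x : X) : 0 ≤ delta A x := by
  unfold delta; split <;> simp

lemma delta_of_mem {X : Type*} {A : Set X} {x : X} (h : x ∈ A) : delta A x = 0 := by
  simp [delta, h]

lemma delta_of_not_mem {X : Type*} {A : Set X} {x : X} (h : x ∉ A) : delta A x = ⊤ := by
  simp [delta, h]

-- deterministic epi-convergence lemma
lemma epiconv_det {X : Type*} [MetricSpace X]
    (Mseq : ℕ → Set X) (hMc : ∀ k, IsClosed (Mseq k))
    (T : Set X) (hT : ∀ x, (∀ k, x ∈ Mseq k) → x ∈ T)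
    (hTsub : ∀ k, T ⊆ Mseq k)
    (g : X → EReal) (gn : ℕ → X → EReal)
    (hg_noBot : ∀ x, g x ≠ ⊥) (hgn_noBot : ∀ n x, gn n x ≠ ⊥)
    (hcc : ContConv gn g) :
    EpiConv (fun n x => gn n x + delta (⋂ k ∈ Finset.range n, Mseq k) x)
      (fun x => g x + delta T x) := by
  intro x
  constructor
  · intro u hu
    by_cases hx : x ∈ T
    · have h1 : Tendsto (fun n => gn n (u n)) atTop (𝓝 (g x)) := hcc x u hu
      have h2 : atTop.liminf (fun n => gn n (u n)) = g x := h1.liminf_eq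
      calc g x + delta T x = g x := by rw [delta_of_mem hx, add_zero]
        _ = atTop.liminf (fun n => gn n (u n)) := h2.symm
        _ ≤ atTop.liminf fun n => gn n (u n) + delta (⋂ k ∈ Finset.range n, Mseq k) (u n) :=
            liminf_le_liminf
              (Eventually.of_forall fun n => le_add_of_nonneg_right (delta_nonneg _ _))
    · -- x ∉ T : show liminf = ⊤
      have hev : ∀ᶠ n in atTop, u n ∉ ⋂ k ∈ Finset.range n, Mseq k := by
        by_contra h
        have hfreq : ∃ᶠ n in atTop, u n ∈ ⋂ k ∈ Finset.range n, Mseq k :=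
          not_eventually.mp h |>.mono (fun n hn => not_not.mp hn)
        apply hx
        apply hT
        intro k
        have hfr2 : ∃ᶠ n in atTop, u n ∈ Mseq k := by
          apply (hfreq.and_eventually (eventually_ge_atTop (k+1))).mono
          rintro n ⟨hn1, hn2⟩
          have : k ∈ Finset.range n := Finset.mem_range.mpr (by omega)
          exact Set.mem_iInter₂.mp hn1 k this
        exact (hMc k).mem_of_frequently_of_tendsto hfr2 hu
      have hev2 : ∀ᶠ n in atTop,
          gn n (u n) + delta (⋂ k ∈ Finset.range n, Mseq k) (u n) = (⊤ : EReal) := by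
        apply hev.mono
        intro n hn
        rw [delta_of_not_mem hn, EReal.add_top_of_ne_bot (hgn_noBot n (u n))]
      have : atTop.liminf (fun n =>
          gn n (u n) + delta (⋂ k ∈ Finset.range n, Mseq k) (u n)) = ⊤ := by
        rw [liminf_congr hev2, liminf_const]
      rw [this]
      exact le_top
  · refine ⟨fun _ => x, tendsto_const_nhds, ?_⟩
    show atTop.limsup (fun n => gn n x + delta (⋂ k ∈ Finset.range n, Mseq k) x) ≤ g x + delta T x
    by_cases hx : x ∈ T
    · have hxS : ∀ n, x ∈ ⋂ k ∈ Finset.range n, Mseq k := by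
        intro n; exact Set.mem_iInter₂.mpr fun k _ => hTsub k hx
      have heq : (fun n => gn n x + delta (⋂ k ∈ Finset.range n, Mseq k) x)
          = fun n => gn n x := by
        funext n; rw [delta_of_mem (hxS n), add_zero]
      rw [heq]
      have h1 : Tendsto (fun n => gn n x) atTop (𝓝 (g x)) := hcc x _ tendsto_const_nhds
      rw [h1.limsup_eq, delta_of_mem hx, add_zero]
    · rw [delta_of_not_mem hx, EReal.add_top_of_ne_bot (hg_noBot x)]
      exact le_top


lemma prod_null {Ξ : Type*} [MeasurableSpace Ξ] {ℙ : Measure Ξ}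
    {P : Measure (ℕ → Ξ)} (hP : IsProductMeasure P ℙ)
    {G : Set Ξ} (hG : MeasurableSet G) (hlt : ℙ G < 1) :
    P {ω | ∀ k, ω k ∈ G} = 0 := by
  have h1 : ∀ n : ℕ, P {ω | ∀ k, ω k ∈ G} ≤ (ℙ G) ^ n := by
    intro n
    calc P {ω | ∀ k, ω k ∈ G} ≤ P {ω | ∀ i ∈ Finset.range n, ω i ∈ G} :=
        measure_mono (fun ω h i _ => h i)
      _ = ∏ _i ∈ Finset.range n, ℙ G := hP (Finset.range n) (fun _ => G) (fun _ => hG)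
      _ = (ℙ G) ^ n := by simp
  have h2 : Tendsto (fun n => (ℙ G) ^ n) atTop (𝓝 0) :=
    ENNReal.tendsto_pow_atTop_nhds_zero_of_lt_one hlt
  exact le_antisymm (ge_of_tendsto' h2 h1) zero_le

lemma coord_null {Ξ : Type*} [MeasurableSpace Ξ] {ℙ : Measure Ξ}
    [IsProbabilityMeasure ℙ]
    {P : Measure (ℕ → Ξ)} (hP : IsProductMeasure P ℙ)
    {N : Set Ξ} (hN : MeasurableSet N) (h0 : ℙ N = 0) (k : ℕ) :
    P {ω | ω k ∈ N} = 0 := by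
  have := hP {k} (fun _ => N) (fun _ => hN)
  simpa [h0] using this

/-- scenario approach. With `P = ℙ^∞` the countable product measure on
sequences of samples, for `P`-a.e. `ω` the functions `f n (ω,·) = g n + δ_{S n ω}`,
with `S n ω = ⋂_{k=1}^n M (ω k)`, epi-converge to `f = g + δ_{M_as}`. -/
theorem scenario_epiConv {X : Type*} [MetricSpace X] [PolishSpace X]
    {Ξ : Type*} [MeasurableSpace Ξ] (ℙ : Measure Ξ) [IsProbabilityMeasure ℙ] [ℙ.IsComplete]
    (P : Measure (ℕ → Ξ)) [IsProbabilityMeasure P] (hP : IsProductMeasure P ℙ)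
    (M : Ξ → Set X) (hM_closed : ∀ ξ, IsClosed (M ξ)) (hM_meas : MeasurableMultifun M)
    (g : X → EReal) (gn : ℕ → X → EReal)
    (hg_noBot : ∀ x, g x ≠ ⊥) (hgn_noBot : ∀ n x, gn n x ≠ ⊥)
    (hg_lsc : LowerSemicontinuous g) (hgn_lsc : ∀ n, LowerSemicontinuous (gn n))
    (hcc : ContConv gn g) :
    ∀ᵐ ω ∂P,
      EpiConv (fun n x => gn n x + delta (⋂ k ∈ Finset.range n, M (ω k)) x)
        (fun x => g x + delta {y : X | ∀ᵐ ζ ∂ℙ, y ∈ M ζ} x) := by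
  rcases isEmpty_or_nonempty X with hX | hX
  · exact Eventually.of_forall fun ω x => (IsEmpty.false x).elim
  set T : Set X := {y : X | ∀ᵐ ζ ∂ℙ, y ∈ M ζ} with hTdef
  -- countable dense subset of T
  obtain ⟨D0, hD0c, hD0d⟩ := TopologicalSpace.exists_countable_dense (↥T)
  set D : Set X := Subtype.val '' D0 with hDdef
  have hDc : D.Countable := hD0c.image _
  have hDsub : D ⊆ T := by rintro y ⟨z, _, rfl⟩; exact z.2
  have hDdense : T ⊆ closure D := by
    intro y hy
    have h1 : (⟨y, hy⟩ : ↥T) ∈ closure D0 := hD0d _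
    exact image_closure_subset_closure_image continuous_subtype_val
      (mem_image_of_mem _ h1)
  -- dense sequence in X
  have hc : DenseRange (TopologicalSpace.denseSeq X) := TopologicalSpace.denseRange_denseSeq X
  set c := TopologicalSpace.denseSeq X with hcdef
  -- Event 1
  have A1 : ∀ᵐ ω ∂P, ∀ y ∈ D, ∀ k, y ∈ M (ω k) := by
    rw [ae_ball_iff hDc]
    intro y hy
    rw [ae_all_iff]
    intro k
    rw [ae_iff]
    have hyT : ∀ᵐ ζ ∂ℙ, y ∈ M ζ := hDsub hy
    have hN0 : ℙ {ζ | y ∉ M ζ} = 0 := by rw [ae_iff] at hyT; exact hyT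
    have hNm : MeasurableSet {ζ | y ∉ M ζ} := measurableSet_of_null hN0
    have : {ω : ℕ → Ξ | ¬ y ∈ M (ω k)} = {ω : ℕ → Ξ | ω k ∈ {ζ | y ∉ M ζ}} := rfl
    rw [this]
    exact coord_null hP hNm hN0 k
  -- Event 2
  have A2 : ∀ᵐ ω ∂P, ∀ p : ℕ × ℚ,
      ℙ {ζ | ¬ (M ζ ∩ Metric.ball (c p.1) (p.2 : ℝ)).Nonempty} ≠ 0 →
      ∃ k, ¬ (M (ω k) ∩ Metric.ball (c p.1) (p.2 : ℝ)).Nonempty := by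
    rw [ae_all_iff]
    rintro ⟨j, q⟩
    by_cases h : ℙ {ζ | ¬ (M ζ ∩ Metric.ball (c j) (q : ℝ)).Nonempty} ≠ 0
    · have hG : MeasurableSet {ζ | (M ζ ∩ Metric.ball (c j) (q : ℝ)).Nonempty} :=
        hM_meas _ Metric.isOpen_ball
      have hcompl : ℙ {ζ | (M ζ ∩ Metric.ball (c j) (q : ℝ)).Nonempty}ᶜ =
          1 - ℙ {ζ | (M ζ ∩ Metric.ball (c j) (q : ℝ)).Nonempty} :=
        prob_compl_eq_one_sub hG
      have hGlt : ℙ {ζ | (M ζ ∩ Metric.ball (c j) (q : ℝ)).Nonempty} < 1 := by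
        rcases lt_or_eq_of_le (prob_le_one
          (μ := ℙ) (s := {ζ | (M ζ ∩ Metric.ball (c j) (q : ℝ)).Nonempty})) with h1 | h1
        · exact h1
        · exfalso
          apply h
          have : {ζ | ¬ (M ζ ∩ Metric.ball (c j) (q : ℝ)).Nonempty} =
              {ζ | (M ζ ∩ Metric.ball (c j) (q : ℝ)).Nonempty}ᶜ := rfl
          rw [this, hcompl, h1, tsub_self]
      have key : ∀ᵐ ω ∂P, ∃ k, ¬ (M (ω k) ∩ Metric.ball (c j) (q : ℝ)).Nonempty := by
        rw [ae_iff]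
        have hsub2 : {ω : ℕ → Ξ | ¬ ∃ k, ¬ (M (ω k) ∩ Metric.ball (c j) (q : ℝ)).Nonempty} ⊆
            {ω : ℕ → Ξ | ∀ k, ω k ∈ {ζ | (M ζ ∩ Metric.ball (c j) (q : ℝ)).Nonempty}} := by
          intro ω hω k
          simp only [mem_setOf_eq, not_exists, not_not] at hω
          exact hω k
        exact measure_mono_null hsub2 (prod_null hP hG hGlt)
      exact key.mono fun ω hω _ => hω
    · exact Eventually.of_forall fun ω hh => absurd hh h
  filter_upwards [A1, A2] with ω h1 h2
  apply epiconv_det (fun k => M (ω k)) (fun k => hM_closed (ω k)) T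
  · -- hT : intersection ⊆ T
    intro x hx
    by_contra hxT
    have hB : ℙ {ζ | x ∉ M ζ} ≠ 0 := by
      intro h0
      exact hxT (ae_iff.mpr h0)
    set C : ℚ → Set Ξ := fun q => {ζ | 0 < (q : ℝ) ∧ M ζ ∩ Metric.ball x (q : ℝ) = ∅}
      with hCdef
    have hcover : {ζ | x ∉ M ζ} ⊆ ⋃ q : ℚ, C q := by
      intro ζ hζ
      have hop : IsOpen (M ζ)ᶜ := (hM_closed ζ).isOpen_compl
      obtain ⟨ε, hε, hball⟩ := Metric.isOpen_iff.mp hop x hζ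
      obtain ⟨q, hq1, hq2⟩ := exists_rat_btwn hε
      refine mem_iUnion.mpr ⟨q, hq1, ?_⟩
      rw [eq_empty_iff_forall_notMem]
      rintro y ⟨hyM, hyB⟩
      exact hball (Metric.mem_ball.mpr (lt_trans (Metric.mem_ball.mp hyB) hq2)) hyM
    have hsum : ∃ q : ℚ, ℙ (C q) ≠ 0 := by
      by_contra hall
      push_neg at hall
      apply hB
      refine le_antisymm ?_ zero_le
      calc ℙ {ζ | x ∉ M ζ} ≤ ℙ (⋃ q : ℚ, C q) := measure_mono hcover
        _ ≤ ∑' q : ℚ, ℙ (C q) := measure_iUnion_le _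
        _ = 0 := by simp [hall]
    obtain ⟨q, hq⟩ := hsum
    obtain ⟨ζ₀, hζ₀⟩ := nonempty_of_measure_ne_zero hq
    have hqpos : 0 < (q : ℝ) := hζ₀.1
    obtain ⟨j, hj⟩ := hc.exists_dist_lt x (by linarith : (0:ℝ) < q / 3)
    obtain ⟨q', hq'1, hq'2⟩ := exists_rat_btwn (by linarith : (q : ℝ) / 3 < (q : ℝ) / 2)
    have hsubset : C q ⊆ {ζ | ¬ (M ζ ∩ Metric.ball (c j) (q' : ℝ)).Nonempty} := by
      rintro ζ ⟨-, hζ2⟩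
      rintro ⟨y, hyM, hyB⟩
      have hyx : dist y x < (q : ℝ) := by
        have d1 : dist y (c j) < (q' : ℝ) := Metric.mem_ball.mp hyB
        have d2 : dist x (c j) < (q : ℝ) / 3 := hj
        calc dist y x ≤ dist y (c j) + dist (c j) x := dist_triangle _ _ _
          _ < (q' : ℝ) + (q : ℝ) / 3 := by
              rw [dist_comm (c j) x]; exact add_lt_add d1 d2
          _ < (q : ℝ) := by linarith
      have : y ∈ M ζ ∩ Metric.ball x (q : ℝ) := ⟨hyM, Metric.mem_ball.mpr hyx⟩
      rw [hζ2] at this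
      exact this
    have hbad : ℙ {ζ | ¬ (M ζ ∩ Metric.ball (c j) (q' : ℝ)).Nonempty} ≠ 0 := by
      intro h0
      exact hq (le_antisymm (h0 ▸ measure_mono hsubset) zero_le)
    obtain ⟨k, hk⟩ := h2 (j, q') hbad
    apply hk
    refine ⟨x, hx k, Metric.mem_ball.mpr ?_⟩
    calc dist x (c j) < (q : ℝ) / 3 := hj
      _ < (q' : ℝ) := hq'1
  · -- hTsub
    intro k y hy
    have : y ∈ closure (M (ω k)) := by
      apply closure_mono (fun z hz => h1 z hz k) (hDdense hy)
    rwa [(hM_closed (ω k)).closure_eq] at this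
  · exact hg_noBot
  · exact hgn_noBot
  · exact hcc
end
end

section
/- Let X be a Polish space, (Ξ, 𝒜, ℙ) a complete probability space with countable product (Ξ^∞, 𝒜^∞, ℙ^∞), M : Ξ ⇉ X a measurable set-valued map with closed values, g : X → ℝ ∪ {+∞} lower semicontinuous, and g_n : X → ℝ ∪ {+∞} a sequence of lower semicontinuous functions converging continuously to g. For ω = (ξ_k)_{k≥1} set S_n(ω) := ⋂_{k=1}^n M(ξ_k) and M_as := {x ∈ X : x ∈ M(ξ) for ℙ-a.e. ξ}. Assume the robust problem min{g(x) : x ∈ M_as} is feasible (there exists x ∈ M_as with g(x) < +∞) and that, for ℙ^∞-a.e. ω, the sequence g_n is eventually level-compact on S_n(ω). Then for ℙ^∞-a.e. ω ∈ Ξ^∞, the optimal values of the scenario problems converge to the robust optimal value: lim_n v(g_n, S_n(ω)) = v(g, M_as). -/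
open Filter Topology MeasureTheory Set

noncomputable section

section Aux

variable {Ξ X : Type*} [MeasurableSpace Ξ] [MetricSpace X]

/-- The set of `ξ` with `x ∈ M ξ` is measurable for a closed-valued measurable multifunction. -/
lemma measurableSet_mem_multifun (M : Ξ → Set X) (hcl : ∀ ξ, IsClosed (M ξ))
    (hm : MeasurableMultifun M) (x : X) : MeasurableSet {ξ | x ∈ M ξ} := by
  have h : {ξ | x ∈ M ξ} = ⋂ m : ℕ, {ξ | (M ξ ∩ Metric.ball x (1 / (m + 1))).Nonempty} := by
    ext ξ
    simp only [Set.mem_setOf_eq, Set.mem_iInter]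
    constructor
    · intro hx m
      exact ⟨x, hx, by simp [Metric.mem_ball]; positivity⟩
    · intro h
      rw [← (hcl ξ).closure_eq]
      rw [Metric.mem_closure_iff]
      intro ε hε
      obtain ⟨m, hm'⟩ := exists_nat_one_div_lt hε
      obtain ⟨y, hy1, hy2⟩ := h m
      exact ⟨y, hy1, lt_trans (by simpa [Metric.mem_ball, dist_comm] using hy2) hm'⟩
  rw [h]
  exact MeasurableSet.iInter fun m => hm _ Metric.isOpen_ball

end Aux

section Prod

variable {Ξ : Type*} [MeasurableSpace Ξ] {ℙ : Measure Ξ} [IsProbabilityMeasure ℙ]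
  {P : Measure (ℕ → Ξ)} [IsProbabilityMeasure P]

/-- Coordinates almost surely lie in any full-measure measurable set. -/
lemma ae_coord_mem (hP : IsProductMeasure P ℙ) {A : Set Ξ} (hA : MeasurableSet A)
    (h1 : ℙ A = 1) (k : ℕ) : ∀ᵐ ω ∂P, ω k ∈ A := by
  have hcyl := hP {k} (fun _ => A) (fun _ => hA)
  simp only [Finset.mem_singleton, Finset.prod_singleton] at hcyl
  have hset : {ω : ℕ → Ξ | ∀ i, i = k → ω i ∈ A} = (fun ω : ℕ → Ξ => ω k) ⁻¹' A := by
    ext ω; simp only [Set.mem_setOf_eq, Set.mem_preimage]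
    exact ⟨fun h => h k rfl, fun h i hi => hi ▸ h⟩
  rw [hset, h1] at hcyl
  have hmeas : MeasurableSet ((fun ω : ℕ → Ξ => ω k) ⁻¹' A) := (measurable_pi_apply k) hA
  have := (prob_compl_eq_zero_iff hmeas).2 hcyl
  filter_upwards [MeasureTheory.measure_eq_zero_iff_ae_notMem.1 this] with ω hω
  simpa using hω

/-- If a measurable set has probability `< 1`, then almost surely some coordinate escapes it. -/
lemma ae_exists_coord_nmem (hP : IsProductMeasure P ℙ) {A : Set Ξ} (hA : MeasurableSet A)
    (h1 : ℙ A < 1) : ∀ᵐ ω ∂P, ∃ k, ω k ∉ A := by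
  have key : P {ω : ℕ → Ξ | ∀ k, ω k ∈ A} = 0 := by
    have hb : ∀ n : ℕ, P {ω : ℕ → Ξ | ∀ k, ω k ∈ A} ≤ ℙ A ^ n := by
      intro n
      have hcyl := hP (Finset.range n) (fun _ => A) (fun _ => hA)
      rw [Finset.prod_const, Finset.card_range] at hcyl
      calc P {ω : ℕ → Ξ | ∀ k, ω k ∈ A}
          ≤ P {ω : ℕ → Ξ | ∀ i ∈ Finset.range n, ω i ∈ A} :=
            measure_mono fun ω hω i _ => hω i
        _ = ℙ A ^ n := hcyl
    have h0 : Filter.Tendsto (fun n : ℕ => ℙ A ^ n) Filter.atTop (nhds 0) :=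
      ENNReal.tendsto_pow_atTop_nhds_zero_of_lt_one h1
    exact le_antisymm (ge_of_tendsto' h0 hb) zero_le
  rw [MeasureTheory.ae_iff]
  convert key using 2
  ext ω; push_neg; rfl

end Prod

/-- scenario approach. If the robust problem is feasible and `g n` is
eventually level-compact on `S n ω` for `P`-a.e. `ω`, then the scenario optimal values
converge to the robust optimal value: `v(g n, S n ω) → v(g, M_as)` a.s. -/
theorem scenario_value_convergence {X : Type*} [MetricSpace X] [PolishSpace X]
    {Ξ : Type*} [MeasurableSpace Ξ] (ℙ : Measure Ξ) [IsProbabilityMeasure ℙ] [ℙ.IsComplete]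
    (P : Measure (ℕ → Ξ)) [IsProbabilityMeasure P] (hP : IsProductMeasure P ℙ)
    (M : Ξ → Set X) (hM_closed : ∀ ξ, IsClosed (M ξ)) (hM_meas : MeasurableMultifun M)
    (g : X → EReal) (gn : ℕ → X → EReal)
    (hg_noBot : ∀ x, g x ≠ ⊥) (hgn_noBot : ∀ n x, gn n x ≠ ⊥)
    (hg_lsc : LowerSemicontinuous g) (hgn_lsc : ∀ n, LowerSemicontinuous (gn n))
    (hcc : ContConv gn g)
    (hfeas : ∃ x ∈ {y : X | ∀ᵐ ζ ∂ℙ, y ∈ M ζ}, g x < ⊤)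
    (hlc : ∀ᵐ ω ∂P, EvLevelCompact gn (fun n => ⋂ k ∈ Finset.range n, M (ω k))) :
    ∀ᵐ ω ∂P,
      Tendsto (fun n => vOn (gn n) (⋂ k ∈ Finset.range n, M (ω k))) atTop
        (𝓝 (vOn g {y : X | ∀ᵐ ζ ∂ℙ, y ∈ M ζ})) := by
  classical
  set Msa := {y : X | ∀ᵐ ζ ∂ℙ, y ∈ M ζ} with hMsa_def
  -- countable dense subset of Msa, inside Msa
  obtain ⟨t, htc, htd⟩ := TopologicalSpace.exists_countable_dense (↥Msa)
  set D0 : Set X := Subtype.val '' t with hD0_def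
  have hD0c : D0.Countable := htc.image _
  have hD0sub : D0 ⊆ Msa := by rintro x ⟨⟨y, hy⟩, _, rfl⟩; exact hy
  have hD0dense : Msa ⊆ closure D0 := by
    intro y hy
    have h1 : (⟨y, hy⟩ : ↥Msa) ∈ closure t := by rw [htd.closure_eq]; trivial
    have h2 : y ∈ Subtype.val '' closure t := ⟨⟨y, hy⟩, h1, rfl⟩
    exact image_closure_subset_closure_image continuous_subtype_val h2
  -- countable dense set in X
  obtain ⟨D, hDc, hDdense⟩ := TopologicalSpace.exists_countable_dense X
  -- Event A : points of D0 belong to all M (ω k)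
  have hA : ∀ᵐ ω ∂P, ∀ x : ↥D0, ∀ k, (x : X) ∈ M (ω k) := by
    have := hD0c.to_subtype
    rw [ae_all_iff]
    intro x
    rw [ae_all_iff]
    intro k
    have hx : (x : X) ∈ Msa := hD0sub x.2
    have hmeas : MeasurableSet {ζ | (x : X) ∈ M ζ} :=
      measurableSet_mem_multifun M hM_closed hM_meas x
    have h1 : ℙ {ζ | (x : X) ∈ M ζ} = 1 := by
      rw [← prob_compl_eq_zero_iff hmeas]
      have : {ζ | (x : X) ∈ M ζ}ᶜ = {ζ | ¬ (x : X) ∈ M ζ} := rfl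
      rw [this, ← MeasureTheory.ae_iff]
      exact hx
    exact ae_coord_mem hP hmeas h1 k
  -- Event B : escaping balls
  have hB : ∀ᵐ ω ∂P, ∀ p : ↥D × ℚ,
      0 < ℙ {ζ | M ζ ∩ Metric.ball (p.1 : X) (p.2 : ℝ) = ∅} →
      ∃ k, M (ω k) ∩ Metric.ball (p.1 : X) (p.2 : ℝ) = ∅ := by
    have := hDc.to_subtype
    rw [ae_all_iff]
    rintro ⟨x, q⟩
    by_cases hq : 0 < ℙ {ζ | M ζ ∩ Metric.ball (x : X) (q : ℝ) = ∅}
    · have hmeas : MeasurableSet {ζ | (M ζ ∩ Metric.ball (x : X) (q : ℝ)).Nonempty} :=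
        hM_meas _ Metric.isOpen_ball
      have hlt : ℙ {ζ | (M ζ ∩ Metric.ball (x : X) (q : ℝ)).Nonempty} < 1 := by
        rcases lt_or_eq_of_le (prob_le_one
          (μ := ℙ) (s := {ζ | (M ζ ∩ Metric.ball (x : X) (q : ℝ)).Nonempty})) with h | h
        · exact h
        · exfalso
          have h0 := (prob_compl_eq_zero_iff hmeas).2 h
          have hcompl : {ζ | (M ζ ∩ Metric.ball (x : X) (q : ℝ)).Nonempty}ᶜ
              = {ζ | M ζ ∩ Metric.ball (x : X) (q : ℝ) = ∅} := by
            ext ζ; simp [Set.not_nonempty_iff_eq_empty]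
          rw [hcompl] at h0
          exact absurd h0 hq.ne'
      filter_upwards [ae_exists_coord_nmem hP hmeas hlt] with ω hω _
      obtain ⟨k, hk⟩ := hω
      exact ⟨k, Set.not_nonempty_iff_eq_empty.1 hk⟩
    · filter_upwards with ω h; exact absurd h hq
  -- main argument
  filter_upwards [hA, hB, hlc] with ω hAω hBω hlcω
  set S : ℕ → Set X := fun n => ⋂ k ∈ Finset.range n, M (ω k) with hS_def
  show Tendsto (fun n => vOn (gn n) (S n)) atTop (𝓝 (vOn g Msa))
  have hS_closed : ∀ n, IsClosed (S n) := fun n => isClosed_biInter fun k _ => hM_closed _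
  have hMsaS : ∀ n, Msa ⊆ S n := by
    intro n
    have h1 : D0 ⊆ S n := by
      intro x hx
      exact Set.mem_iInter₂.2 fun k _ => hAω ⟨x, hx⟩ k
    exact fun y hy => ((hS_closed n).closure_subset_iff.2 h1) (hD0dense hy)
  -- upper bound
  have hup : atTop.limsup (fun n => vOn (gn n) (S n)) ≤ vOn g Msa := by
    refine le_iInf₂ fun x hx => ?_
    have h1 : ∀ n, vOn (gn n) (S n) ≤ gn n x := fun n => iInf₂_le x (hMsaS n hx)
    have h2 : Tendsto (fun n => gn n x) atTop (𝓝 (g x)) :=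
      hcc x (fun _ => x) tendsto_const_nhds
    calc atTop.limsup (fun n => vOn (gn n) (S n))
        ≤ atTop.limsup (fun n => gn n x) := limsup_le_limsup (Eventually.of_forall h1)
      _ = g x := h2.limsup_eq
  -- lower bound
  have hlow : vOn g Msa ≤ atTop.liminf (fun n => vOn (gn n) (S n)) := by
    by_contra hlt
    push_neg at hlt
    obtain ⟨α, hα1, hα2⟩ := EReal.exists_between_coe_real hlt
    have hfreq : ∃ᶠ n in atTop, vOn (gn n) (S n) < (α : EReal) :=
      frequently_lt_of_liminf_lt (h := hα1)
    obtain ⟨N, hK⟩ := hlcω α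
    have hfreq2 : ∃ᶠ n in atTop, N ≤ n ∧ vOn (gn n) (S n) < (α : EReal) :=
      (eventually_ge_atTop N).and_frequently hfreq
    obtain ⟨φ, hφmono, hφ⟩ := Filter.extraction_of_frequently_atTop hfreq2
    have hxex : ∀ j, ∃ x, x ∈ S (φ j) ∧ gn (φ j) x < (α : EReal) := by
      intro j
      have h := (hφ j).2
      rw [vOn] at h
      obtain ⟨x, hx⟩ := iInf_lt_iff.1 h
      obtain ⟨hxS, hxlt⟩ := iInf_lt_iff.1 hx
      exact ⟨x, hxS, hxlt⟩
    choose xs hxsS hxslt using hxex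
    have hxsK : ∀ j, xs j ∈ closure (⋃ n ∈ Ici N, {x ∈ S n | gn n x ≤ (α : EReal)}) := by
      intro j
      exact subset_closure (Set.mem_biUnion (hφ j).1 ⟨hxsS j, (hxslt j).le⟩)
    obtain ⟨x0, _, ψ, hψmono, hψtend⟩ := hK.tendsto_subseq hxsK
    set σ : ℕ → ℕ := φ ∘ ψ with hσ_def
    have hσmono : StrictMono σ := hφmono.comp hψmono
    set ys : ℕ → X := fun j => xs (ψ j) with hys_def
    have hystend : Tendsto ys atTop (𝓝 x0) := hψtend
    have hysS : ∀ j, ys j ∈ S (σ j) := fun j => hxsS (ψ j)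
    have hyslt : ∀ j, gn (σ j) (ys j) < (α : EReal) := fun j => hxslt (ψ j)
    -- build a full sequence converging to x0
    set u : ℕ → X := fun n => if h : ∃ j, σ j = n then ys h.choose else x0 with hu_def
    have huσ : ∀ j, u (σ j) = ys j := by
      intro j
      have h : ∃ j', σ j' = σ j := ⟨j, rfl⟩
      have := h.choose_spec
      have hj : h.choose = j := hσmono.injective this
      simp only [hu_def, dif_pos h, hj]
    have hutend : Tendsto u atTop (𝓝 x0) := by
      rw [tendsto_atTop'] at hystend ⊢
      intro s hs
      obtain ⟨J, hJ⟩ := hystend s hs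
      refine ⟨σ J, fun n hn => ?_⟩
      by_cases h : ∃ j, σ j = n
      · have hspec := h.choose_spec
        have hJle : J ≤ h.choose := by
          have : σ J ≤ σ h.choose := by rw [hspec]; exact hn
          exact hσmono.le_iff_le.1 this
        simpa only [hu_def, dif_pos h] using hJ _ hJle
      · simpa only [hu_def, dif_neg h] using mem_of_mem_nhds hs
    have hgn_tend : Tendsto (fun n => gn n (u n)) atTop (𝓝 (g x0)) := hcc x0 u hutend
    have hg_tend : Tendsto (fun j => gn (σ j) (ys j)) atTop (𝓝 (g x0)) := by
      have := hgn_tend.comp hσmono.tendsto_atTop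
      simpa only [Function.comp_def, huσ] using this
    have hgx0 : g x0 ≤ (α : EReal) :=
      le_of_tendsto hg_tend (Eventually.of_forall fun j => (hyslt j).le)
    have hx0notin : x0 ∉ Msa := by
      intro hx0
      exact absurd (lt_of_le_of_lt (le_trans (iInf₂_le x0 hx0) hgx0) hα2) (lt_irrefl _)
    -- derive contradiction: x0 must be in Msa
    have hT : ℙ {ζ | x0 ∉ M ζ} ≠ 0 := by
      intro h0
      exact hx0notin (MeasureTheory.ae_iff.2 h0)
    have hUnion : {ζ | x0 ∉ M ζ} ⊆
        ⋃ m : ℕ, {ζ | M ζ ∩ Metric.ball x0 (1 / (m + 1)) = ∅} := by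
      intro ζ hζ
      have hd : 0 < Metric.infDist x0 (M ζ) ∨ M ζ = ∅ := by
        rcases eq_empty_or_nonempty (M ζ) with h | h
        · exact Or.inr h
        · exact Or.inl (((hM_closed ζ).notMem_iff_infDist_pos h).1 hζ)
      rcases hd with hd | hd
      · obtain ⟨m, hm⟩ := exists_nat_one_div_lt hd
        refine Set.mem_iUnion.2 ⟨m, ?_⟩
        simp only [Set.mem_setOf_eq]
        rw [Set.eq_empty_iff_forall_notMem]
        rintro y ⟨hyM, hyb⟩
        have : Metric.infDist x0 (M ζ) ≤ dist x0 y := Metric.infDist_le_dist_of_mem hyM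
        rw [Metric.mem_ball, dist_comm] at hyb
        linarith
      · exact Set.mem_iUnion.2 ⟨0, by simp [hd]⟩
    have hm_exists : ∃ m : ℕ, ℙ {ζ | M ζ ∩ Metric.ball x0 (1 / (m + 1)) = ∅} ≠ 0 := by
      by_contra h
      push_neg at h
      exact hT (le_antisymm (le_trans (measure_mono hUnion)
        (le_of_eq (measure_iUnion_null h))) zero_le)
    obtain ⟨m, hm⟩ := hm_exists
    set δ : ℝ := 1 / (m + 1) with hδ_def
    have hδpos : 0 < δ := by positivity
    obtain ⟨x', hx'D, hx'close⟩ : ∃ x' ∈ D, dist x0 x' < δ / 4 := by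
      have := hDdense.exists_dist_lt x0 (by positivity : (0:ℝ) < δ / 4)
      obtain ⟨y, hy1, hy2⟩ := this
      exact ⟨y, hy1, hy2⟩
    obtain ⟨q, hq1, hq2⟩ := exists_rat_btwn (show (δ/4 : ℝ) < δ/2 by linarith)
    have hball_sub : Metric.ball x' (q : ℝ) ⊆ Metric.ball x0 δ := by
      intro y hy
      rw [Metric.mem_ball] at hy ⊢
      have := dist_triangle y x' x0
      rw [dist_comm x0 x'] at hx'close
      linarith
    have hqprob : 0 < ℙ {ζ | M ζ ∩ Metric.ball x' (q : ℝ) = ∅} := by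
      refine lt_of_lt_of_le (pos_iff_ne_zero.2 hm) (measure_mono ?_)
      intro ζ hζ
      simp only [Set.mem_setOf_eq] at hζ ⊢
      rw [Set.eq_empty_iff_forall_notMem]
      rintro y ⟨hyM, hyb⟩
      rw [Set.eq_empty_iff_forall_notMem] at hζ
      exact hζ y ⟨hyM, hball_sub hyb⟩
    obtain ⟨k, hk⟩ := hBω ⟨⟨x', hx'D⟩, q⟩ hqprob
    -- eventually ys j ∈ ball x' q and σ j > k : contradiction
    have hx0ball : x0 ∈ Metric.ball x' (q : ℝ) := by
      rw [Metric.mem_ball]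
      linarith
    have hev1 : ∀ᶠ j in atTop, ys j ∈ Metric.ball x' (q : ℝ) :=
      hystend (Metric.isOpen_ball.mem_nhds hx0ball)
    have hev2 : ∀ᶠ j in atTop, k < σ j :=
      eventually_atTop.2 ⟨k + 1, fun j hj => lt_of_lt_of_le (Nat.lt_succ_iff.2 le_rfl)
        (le_trans hj (hσmono.le_apply))⟩
    obtain ⟨j, hj1, hj2⟩ := (hev1.and hev2).exists
    have hyM : ys j ∈ M (ω k) := by
      have := hysS j
      rw [hS_def] at this
      exact Set.mem_iInter₂.1 this k (Finset.mem_range.2 hj2)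
    rw [Set.eq_empty_iff_forall_notMem] at hk
    exact hk (ys j) ⟨hyM, hj1⟩
  exact tendsto_of_le_liminf_of_limsup_le hlow hup
end
end
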